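/- arXiv:1407.1153 — 4 statements merged into one kernel-verified Lean document; each statement's English description precedes it below -/
import Mathlib

section
/- If S ⊆ S^n is a k-sphere (the intersection of a (k+1)-dimensional linear subspace of R^{n+1} with S^n), 0 ≤ k ≤ n−1, such that S ∩ S_u^+ is nonempty, then the image g_u(S ∩ S_u^+) is a k-dimensional affine subspace of R^n_u; conversely, g_u^{-1} maps k-dimensional affine subspaces of R^n_u to relatively open k-hemispheres in S_u^+. -/
open scoped RealInnerProductSpace Pointwise
open Real

noncomputable section

/-- `Esp n` is the ambient Euclidean space `ℝ^{n+1}` containing the unit sphere `S^n`. -/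
abbrev Esp (n : ℕ) : Type := EuclideanSpace ℝ (Fin (n + 1))

/-- The unit sphere `S^n ⊆ ℝ^{n+1}`. -/
def uSphere (n : ℕ) : Set (Esp n) := {x | ‖x‖ = 1}

/-- `rad A = {λ • x : λ ≥ 0, x ∈ A}`. -/
def radSet {n : ℕ} (A : Set (Esp n)) : Set (Esp n) :=
  {y | ∃ l : ℝ, 0 ≤ l ∧ ∃ x ∈ A, y = l • x}

/-- A set `A ⊆ S^n` is spherically convex if `rad A` is convex. -/
def SphConvex {n : ℕ} (A : Set (Esp n)) : Prop := Convex ℝ (radSet A)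

/-- The open hemisphere centered at `u`. -/
def openHemi {n : ℕ} (u : Esp n) : Set (Esp n) := {v | ‖v‖ = 1 ∧ 0 < ⟪u, v⟫}

/-- The equator `S_u = {v ∈ S^n : u ⬝ v = 0}`. -/
def equator {n : ℕ} (u : Esp n) : Set (Esp n) := {v | ‖v‖ = 1 ∧ ⟪u, v⟫ = 0}

/-- Proper convex bodies contained in the open hemisphere centered at `u`:
the class `K_u^p(S^n)`. -/
def properBodies {n : ℕ} (u : Esp n) : Set (Set (Esp n)) :=
  {K | K.Nonempty ∧ IsClosed K ∧ K ⊆ openHemi u ∧ SphConvex K}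

/-- All proper convex bodies `K^p(S^n)`. -/
def allProperBodies (n : ℕ) : Set (Set (Esp n)) :=
  {K | ∃ u : Esp n, ‖u‖ = 1 ∧ K ∈ properBodies u}

/-- The gnomonic projection `g_u(v) = v/(u⬝v) − u`. -/
def gno {n : ℕ} (u v : Esp n) : Esp n := (⟪u, v⟫)⁻¹ • v - u

/-- The inverse gnomonic projection `x ↦ (x+u)/‖x+u‖`. -/
def gnoInv {n : ℕ} (u x : Esp n) : Esp n := ‖x + u‖⁻¹ • (x + u)

/-- The hyperplane `ℝ^n_u = u^⊥` of `ℝ^{n+1}`. -/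
def hyper {n : ℕ} (u : Esp n) : Set (Esp n) := {x | ⟪u, x⟫ = 0}

/-- The class `K(ℝ^n_u)` of (nonempty) compact convex subsets of the hyperplane `u^⊥`. -/
def cptCvx {n : ℕ} (u : Esp n) : Set (Set (Esp n)) :=
  {C | C.Nonempty ∧ IsCompact C ∧ Convex ℝ C ∧ C ⊆ hyper u}

/-- The spherical support function `h_u(K,v) = max {sgn(v⬝w) d(u, w|S_{u,v}) : w ∈ K}`,
where `d(u, w|S_{u,v}) = arccos ((u⬝w)/√((u⬝w)² + (v⬝w)²))`. -/
def sphSupp {n : ℕ} (u : Esp n) (K : Set (Esp n)) (v : Esp n) : ℝ :=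
  sSup ((fun w => Real.sign ⟪v, w⟫ *
    Real.arccos (⟪u, w⟫ / Real.sqrt (⟪u, w⟫ ^ 2 + ⟪v, w⟫ ^ 2))) '' K)

/-- The Euclidean support function `h(C,x) = sup {x ⬝ y : y ∈ C}`. -/
def esupp {n : ℕ} (C : Set (Esp n)) (x : Esp n) : ℝ :=
  sSup ((fun y => ⟪x, y⟫) '' C)

/-- Spherical (geodesic) distance on `S^n`. -/
def sphDist {n : ℕ} (x y : Esp n) : ℝ := Real.arccos ⟪x, y⟫

/-- The Hausdorff distance `δ_s` induced by the spherical distance. -/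
def sphHaus {n : ℕ} (A B : Set (Esp n)) : ℝ :=
  sInf {r | 0 ≤ r ∧ (∀ a ∈ A, ∃ b ∈ B, sphDist a b ≤ r) ∧
    (∀ b ∈ B, ∃ a ∈ A, sphDist a b ≤ r)}

/-- The metric `γ_u(K,L) = max_{v ∈ S_u} |h_u(K,v) − h_u(L,v)|`. -/
def gammaU {n : ℕ} (u : Esp n) (K L : Set (Esp n)) : ℝ :=
  sSup ((fun v => |sphSupp u K v - sphSupp u L v|) '' equator u)

/-- Spherical projection of `K` onto the great subsphere `V ∩ S^n`:
`K|S = (rad K | V) ∩ S^n`. -/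
def sphProj {n : ℕ} (V : Submodule ℝ (Esp n)) (K : Set (Esp n)) : Set (Esp n) :=
  ((fun x => (V.orthogonalProjection x : Esp n)) '' radSet K) ∩ uSphere n

/-- Orthogonal projection of a subset of `ℝ^{n+1}` onto a linear subspace `W`. -/
def eProj {n : ℕ} (W : Submodule ℝ (Esp n)) (C : Set (Esp n)) : Set (Esp n) :=
  (fun x => (W.orthogonalProjection x : Esp n)) '' C

/-- The spherical convex hull: the intersection of all spherically convex subsets of `S^n`
containing `A`. -/
def sphHull {n : ℕ} (A : Set (Esp n)) : Set (Esp n) :=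
  ⋂₀ {B | A ⊆ B ∧ B ⊆ uSphere n ∧ SphConvex B}

/-- The set `C` of pairs of proper convex bodies contained in a common open hemisphere. -/
def pairsC (n : ℕ) : Set (Set (Esp n) × Set (Esp n)) :=
  {p | ∃ u : Esp n, ‖u‖ = 1 ∧ p.1 ∈ properBodies u ∧ p.2 ∈ properBodies u}

/-- `u`-projection covariance of a binary operation on `K_u^p(S^n)`:
`(K|S) * (L|S) = (K*L)|S` for all great subspheres `S = V ∩ S^n` through `u`
with `0 ≤ k = dim S ≤ n − 1`. -/
def uProjCovariant {n : ℕ} (u : Esp n)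
    (op : Set (Esp n) → Set (Esp n) → Set (Esp n)) : Prop :=
  ∀ V : Submodule ℝ (Esp n), u ∈ V → Module.finrank ℝ V ≤ n →
    ∀ K ∈ properBodies u, ∀ L ∈ properBodies u,
      op (sphProj V K) (sphProj V L) = sphProj V (op K L)

/-- Projection covariance: `u`-projection covariance for every `u ∈ S^n`. -/
def projCovariantC {n : ℕ} (op : Set (Esp n) → Set (Esp n) → Set (Esp n)) : Prop :=
  ∀ u : Esp n, ‖u‖ = 1 → uProjCovariant u op

/-- Projection covariance for operations on compact convex subsets of `u^⊥`. -/
def eProjCovariant {n : ℕ} (u : Esp n)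
    (op : Set (Esp n) → Set (Esp n) → Set (Esp n)) : Prop :=
  ∀ W : Submodule ℝ (Esp n), (W : Set (Esp n)) ⊆ hyper u →
    ∀ K ∈ cptCvx u, ∀ L ∈ cptCvx u,
      op (eProj W K) (eProj W L) = eProj W (op K L)

/-- If `S = V ∩ S^n` is a `k`-sphere (`dim V = k+1`, `0 ≤ k ≤ n−1`) meeting
the open hemisphere `S_u^+`, then `g_u(S ∩ S_u^+)` is a `k`-dimensional affine subspace of
`u^⊥`; conversely, `g_u^{-1}` maps every `k`-dimensional affine subspace of `u^⊥` onto a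
(relatively open) `k`-hemisphere `S ∩ S_u^+` for some `k`-sphere `S`. -/
theorem stmt2 {n : ℕ} (hn : 2 ≤ n) (u : Esp n) (hu : ‖u‖ = 1) (k : ℕ) (hk : k ≤ n - 1) :
    (∀ V : Submodule ℝ (Esp n), Module.finrank ℝ V = k + 1 →
      ((V : Set (Esp n)) ∩ uSphere n ∩ openHemi u).Nonempty →
      ∃ A : AffineSubspace ℝ (Esp n), (A : Set (Esp n)).Nonempty ∧
        (A : Set (Esp n)) ⊆ hyper u ∧ Module.finrank ℝ A.direction = k ∧
        gno u '' ((V : Set (Esp n)) ∩ uSphere n ∩ openHemi u) = (A : Set (Esp n))) ∧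
    (∀ A : AffineSubspace ℝ (Esp n), (A : Set (Esp n)).Nonempty →
      (A : Set (Esp n)) ⊆ hyper u → Module.finrank ℝ A.direction = k →
      ∃ V : Submodule ℝ (Esp n), Module.finrank ℝ V = k + 1 ∧
        gnoInv u '' (A : Set (Esp n)) = (V : Set (Esp n)) ∩ uSphere n ∩ openHemi u) := by
  have huu : ⟪u, u⟫ = 1 := by
    have h := real_inner_self_eq_norm_sq u
    rw [hu] at h; simpa using h
  constructor
  · -- forward direction
    rintro V hV ⟨v0, ⟨⟨hv0V, hv0S⟩, hv0H⟩⟩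
    have hv0pos : 0 < ⟪u, v0⟫ := hv0H.2
    -- the carrier set
    set S₀ : Set (Esp n) := {y | ∃ w, w ∈ V ∧ ⟪u, w⟫ = 1 ∧ y = w - u} with hS₀
    have hSmem : ∀ c : ℝ, ∀ p1 p2 p3 : Esp n, p1 ∈ S₀ → p2 ∈ S₀ → p3 ∈ S₀ →
        c • (p1 -ᵥ p2) +ᵥ p3 ∈ S₀ := by
      rintro c p1 p2 p3 ⟨w1, hw1V, hw1i, rfl⟩ ⟨w2, hw2V, hw2i, rfl⟩ ⟨w3, hw3V, hw3i, rfl⟩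
      refine ⟨c • (w1 - w2) + w3, ?_, ?_, ?_⟩
      · exact V.add_mem (V.smul_mem _ (V.sub_mem hw1V hw2V)) hw3V
      · rw [inner_add_right, inner_smul_right, inner_sub_right, hw1i, hw2i, hw3i]; ring
      · simp only [vsub_eq_sub, vadd_eq_add]; abel
    set A : AffineSubspace ℝ (Esp n) := ⟨S₀, fun c {p1 p2 p3} h1 h2 h3 => hSmem c p1 p2 p3 h1 h2 h3⟩ with hA
    have hmemA : ∀ y : Esp n, y ∈ A ↔ ∃ w, w ∈ V ∧ ⟪u, w⟫ = 1 ∧ y = w - u := fun y => Iff.rfl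
    -- w0 : a point of V on the affine hyperplane
    set w0 : Esp n := (⟪u, v0⟫)⁻¹ • v0 with hw0
    have hw0V : w0 ∈ V := V.smul_mem _ hv0V
    have hw0i : ⟪u, w0⟫ = 1 := by
      rw [hw0, inner_smul_right]; exact inv_mul_cancel₀ (ne_of_gt hv0pos)
    have hAne : (A : Set (Esp n)).Nonempty := ⟨w0 - u, ⟨w0, hw0V, hw0i, rfl⟩⟩
    have hAsub : (A : Set (Esp n)) ⊆ hyper u := by
      rintro y ⟨w, hwV, hwi, rfl⟩
      show ⟪u, w - u⟫ = 0
      rw [inner_sub_right, hwi, huu]; ring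
    -- direction computation
    set f : Esp n →ₗ[ℝ] ℝ := (innerSL ℝ u : Esp n →L[ℝ] ℝ).toLinearMap with hf
    have hfapp : ∀ x, f x = ⟪u, x⟫ := fun x => rfl
    have hdir : A.direction = V ⊓ LinearMap.ker f := by
      ext x
      rw [AffineSubspace.mem_direction_iff_eq_vsub hAne]
      constructor
      · rintro ⟨p1, hp1, p2, hp2, rfl⟩
        obtain ⟨w1, hw1V, hw1i, rfl⟩ := hp1
        obtain ⟨w2, hw2V, hw2i, rfl⟩ := hp2
        have : (w1 - u) -ᵥ (w2 - u) = w1 - w2 := by simp only [vsub_eq_sub]; abel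
        rw [this]
        refine Submodule.mem_inf.2 ⟨V.sub_mem hw1V hw2V, ?_⟩
        rw [LinearMap.mem_ker, hfapp, inner_sub_right, hw1i, hw2i]; ring
      · intro hx
        obtain ⟨hxV, hxk⟩ := Submodule.mem_inf.1 hx
        have hxi : ⟪u, x⟫ = 0 := hxk
        refine ⟨(x + w0) - u, ⟨x + w0, V.add_mem hxV hw0V, ?_, rfl⟩, w0 - u,
          ⟨w0, hw0V, hw0i, rfl⟩, ?_⟩
        · rw [inner_add_right, hxi, hw0i]; ring
        · simp only [vsub_eq_sub]; abel
    -- finrank of the direction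
    set φ : V →ₗ[ℝ] ℝ := f.comp V.subtype with hφ
    have hφsurj : Function.Surjective φ := by
      intro c
      refine ⟨⟨c • w0, V.smul_mem _ hw0V⟩, ?_⟩
      show f (c • w0) = c
      rw [hfapp, inner_smul_right, hw0i]; ring
    have hrange : LinearMap.range φ = ⊤ := LinearMap.range_eq_top.2 hφsurj
    have hrn := LinearMap.finrank_range_add_finrank_ker φ
    rw [hrange] at hrn
    have h1 : Module.finrank ℝ (⊤ : Submodule ℝ ℝ) = 1 := by
      rw [finrank_top]; exact Module.finrank_self ℝ
    rw [h1, hV] at hrn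
    have hkerφ : Module.finrank ℝ (LinearMap.ker φ) = k := by omega
    have hmap : Submodule.map V.subtype (LinearMap.ker φ) = V ⊓ LinearMap.ker f := by
      rw [hφ, LinearMap.ker_comp, Submodule.map_comap_subtype]
    have hdimdir : Module.finrank ℝ A.direction = k := by
      rw [hdir, ← hmap, Submodule.finrank_map_subtype_eq, hkerφ]
    refine ⟨A, hAne, hAsub, hdimdir, ?_⟩
    -- image equality
    ext y
    constructor
    · rintro ⟨v, ⟨⟨hvV, hvS⟩, hvH⟩, rfl⟩
      have hvpos : 0 < ⟪u, v⟫ := hvH.2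
      refine ⟨(⟪u, v⟫)⁻¹ • v, V.smul_mem _ hvV, ?_, rfl⟩
      rw [inner_smul_right]; exact inv_mul_cancel₀ (ne_of_gt hvpos)
    · rintro ⟨w, hwV, hwi, rfl⟩
      have hwne : w ≠ 0 := by
        rintro rfl; simp at hwi
      have hnw : (0:ℝ) < ‖w‖ := norm_pos_iff.2 hwne
      refine ⟨‖w‖⁻¹ • w, ⟨⟨V.smul_mem _ hwV, ?_⟩, ?_, ?_⟩, ?_⟩
      · show ‖‖w‖⁻¹ • w‖ = 1
        rw [norm_smul, norm_inv, norm_norm]; field_simp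
      · show ‖‖w‖⁻¹ • w‖ = 1
        rw [norm_smul, norm_inv, norm_norm]; field_simp
      · show 0 < ⟪u, ‖w‖⁻¹ • w⟫
        rw [inner_smul_right, hwi, mul_one]
        exact inv_pos.2 hnw
      · show (⟪u, ‖w‖⁻¹ • w⟫)⁻¹ • (‖w‖⁻¹ • w) - u = w - u
        rw [inner_smul_right, hwi, mul_one, inv_inv, smul_smul]
        rw [mul_inv_cancel₀ (ne_of_gt hnw), one_smul]
  · -- reverse direction
    rintro A ⟨a, ha⟩ hAsub hAdim
    have hai : ⟪u, a⟫ = 0 := hAsub ha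
    have hdirI : ∀ d ∈ A.direction, ⟪u, d⟫ = 0 := by
      intro d hd
      obtain ⟨p1, hp1, p2, hp2, rfl⟩ :=
        (AffineSubspace.mem_direction_iff_eq_vsub ⟨a, ha⟩ d).1 hd
      have h1 : ⟪u, p1⟫ = 0 := hAsub hp1
      have h2 : ⟪u, p2⟫ = 0 := hAsub hp2
      show ⟪u, p1 - p2⟫ = 0
      rw [inner_sub_right, h1, h2]; ring
    have haui : ⟪u, a + u⟫ = 1 := by rw [inner_add_right, hai, huu]; ring
    have haune : a + u ≠ 0 := by
      intro h; rw [h] at haui; simp at haui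
    set V : Submodule ℝ (Esp n) := A.direction ⊔ (ℝ ∙ (a + u)) with hVdef
    have hinf : A.direction ⊓ (ℝ ∙ (a + u)) = ⊥ := by
      rw [Submodule.eq_bot_iff]
      rintro x ⟨hx1, hx2⟩
      obtain ⟨c, rfl⟩ := Submodule.mem_span_singleton.1 hx2
      have : ⟪u, c • (a + u)⟫ = 0 := hdirI _ hx1
      rw [inner_smul_right, haui, mul_one] at this
      rw [this, zero_smul]
    have hdimV : Module.finrank ℝ V = k + 1 := by
      have := Submodule.finrank_sup_add_finrank_inf_eq A.direction (ℝ ∙ (a + u))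
      rw [hinf, finrank_bot, hAdim, finrank_span_singleton haune, ← hVdef] at this
      omega
    refine ⟨V, hdimV, ?_⟩
    ext y
    constructor
    · rintro ⟨x, hx, rfl⟩
      have hxi : ⟪u, x⟫ = 0 := hAsub hx
      have hxui : ⟪u, x + u⟫ = 1 := by rw [inner_add_right, hxi, huu]; ring
      have hxune : x + u ≠ 0 := by intro h; rw [h] at hxui; simp at hxui
      have hxun : (0:ℝ) < ‖x + u‖ := norm_pos_iff.2 hxune
      have hxuV : x + u ∈ V := by
        have h1 : x - a ∈ A.direction := AffineSubspace.vsub_mem_direction hx ha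
        have h2 : x + u = (x - a) + (a + u) := by abel
        rw [h2]
        exact Submodule.add_mem _ (Submodule.mem_sup_left h1)
          (Submodule.mem_sup_right (Submodule.mem_span_singleton_self _))
      have hnorm : ‖gnoInv u x‖ = 1 := by
        show ‖‖x + u‖⁻¹ • (x + u)‖ = 1
        rw [norm_smul, norm_inv, norm_norm]; field_simp
      refine ⟨⟨?_, hnorm⟩, hnorm, ?_⟩
      · show gnoInv u x ∈ V
        exact V.smul_mem _ hxuV
      · show 0 < ⟪u, ‖x + u‖⁻¹ • (x + u)⟫
        rw [inner_smul_right, hxui, mul_one]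
        exact inv_pos.2 hxun
    · rintro ⟨⟨hyV, hyS⟩, hyH⟩
      have hypos : 0 < ⟪u, y⟫ := hyH.2
      set t : ℝ := ⟪u, y⟫ with ht
      obtain ⟨d, hd, z, hz, hdz⟩ := Submodule.mem_sup.1 hyV
      obtain ⟨c, rfl⟩ := Submodule.mem_span_singleton.1 hz
      have hct : c = t := by
        have : ⟪u, d + c • (a + u)⟫ = t := by rw [hdz]
        rw [inner_add_right, hdirI d hd, inner_smul_right, haui] at this
        linarith
      subst hct
      have htne : t ≠ 0 := ne_of_gt hypos
      set x : Esp n := t⁻¹ • d + a with hx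
      have hxA : x ∈ A := by
        have : t⁻¹ • d ∈ A.direction := A.direction.smul_mem _ hd
        have h2 := AffineSubspace.vadd_mem_of_mem_direction this ha
        simpa [hx, vadd_eq_add] using h2
      refine ⟨x, hxA, ?_⟩
      have hxu : x + u = t⁻¹ • y := by
        rw [hx, ← hdz, smul_add, smul_smul, inv_mul_cancel₀ htne, one_smul]
        abel
      have hyn : ‖y‖ = 1 := hyS
      show ‖x + u‖⁻¹ • (x + u) = y
      rw [hxu, norm_smul, norm_inv, Real.norm_eq_abs, abs_of_pos hypos, hyn, mul_one,
        inv_inv, smul_smul, mul_inv_cancel₀ htne, one_smul]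
end
end

section
/- For u ∈ S^n and every proper convex body K contained in the open hemisphere S_u^+, the Euclidean support function of the gnomonic image satisfies h(g_u(K), v) = tan h_u(K, v) for every v in the equator S_u = {v ∈ S^n : u·v = 0}. In particular, K is uniquely determined by its spherical support function h_u(K, ·). -/
open scoped RealInnerProductSpace Pointwise
open Real

noncomputable section

section Aux

/-- Key real identity. -/
lemma aux_sign_arccos_pos {a b : ℝ} (ha : 0 < a) (hb : 0 < b) :
    Real.sign b * Real.arccos (a / Real.sqrt (a ^ 2 + b ^ 2)) = Real.arctan (b / a) := by
  have hs : 0 < Real.sqrt (a ^ 2 + b ^ 2) := Real.sqrt_pos.2 (by positivity)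
  have hx : 0 < a / Real.sqrt (a ^ 2 + b ^ 2) := div_pos ha hs
  rw [Real.sign_of_pos hb, one_mul, Real.arccos_eq_arctan hx]
  congr 1
  have hss : Real.sqrt (a ^ 2 + b ^ 2) ^ 2 = a ^ 2 + b ^ 2 :=
    Real.sq_sqrt (by positivity)
  have h1 : 1 - (a / Real.sqrt (a ^ 2 + b ^ 2)) ^ 2 = b ^ 2 / (a ^ 2 + b ^ 2) := by
    rw [div_pow, hss]
    field_simp
    ring
  rw [h1, Real.sqrt_div (by positivity) _, Real.sqrt_sq hb.le]
  field_simp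

lemma aux_sign_arccos {a : ℝ} (ha : 0 < a) (b : ℝ) :
    Real.sign b * Real.arccos (a / Real.sqrt (a ^ 2 + b ^ 2)) = Real.arctan (b / a) := by
  rcases lt_trichotomy b 0 with hb | rfl | hb
  · have h := aux_sign_arccos_pos ha (neg_pos.2 hb)
    rw [Real.sign_of_pos (neg_pos.2 hb), one_mul] at h
    have hsq : a ^ 2 + (-b) ^ 2 = a ^ 2 + b ^ 2 := by ring
    rw [hsq, neg_div, Real.arctan_neg] at h
    rw [Real.sign_of_neg hb, neg_one_mul, h, neg_neg]
  · simp [Real.sign_zero]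
  · exact aux_sign_arccos_pos ha hb

end Aux
section Geo

variable {n : ℕ} {u : Esp n}

lemma properBodies_isCompact {K : Set (Esp n)} (hK : K ∈ properBodies u) :
    IsCompact K := by
  obtain ⟨hne, hcl, hsub, hcv⟩ := hK
  refine Metric.isCompact_of_isClosed_isBounded hcl ?_
  exact isBounded_iff_forall_norm_le.2 ⟨1, fun x hx => ((hsub hx).1).le⟩

lemma gno_inner_left (hu : ‖u‖ = 1) {w : Esp n} (hw : 0 < ⟪u, w⟫) :
    ⟪u, gno u w⟫ = 0 := by
  have : ⟪u, u⟫ = 1 := by rw [real_inner_self_eq_norm_sq, hu]; norm_num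
  rw [gno, inner_sub_right, real_inner_smul_right, this, inv_mul_cancel₀ hw.ne']
  ring

lemma gno_inner_eq {v : Esp n} (hv : v ∈ equator u) (w : Esp n) :
    ⟪v, gno u w⟫ = ⟪v, w⟫ / ⟪u, w⟫ := by
  have hvu : ⟪v, u⟫ = 0 := by rw [real_inner_comm]; exact hv.2
  rw [gno, inner_sub_right, real_inner_smul_right, hvu, sub_zero, div_eq_inv_mul]

lemma gnoInv_gno (hu : ‖u‖ = 1) {w : Esp n} (hw : w ∈ openHemi u) :
    gnoInv u (gno u w) = w := by
  have ha : 0 < ⟪u, w⟫ := hw.2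
  have h1 : gno u w + u = (⟪u, w⟫)⁻¹ • w := by rw [gno, sub_add_cancel]
  have h2 : ‖(⟪u, w⟫)⁻¹ • w‖ = (⟪u, w⟫)⁻¹ := by
    rw [norm_smul, Real.norm_eq_abs, abs_of_pos (inv_pos.2 ha), hw.1, mul_one]
  rw [gnoInv, h1, h2, inv_inv, smul_smul, mul_inv_cancel₀ ha.ne', one_smul]

lemma gno_image_mem_hyper (hu : ‖u‖ = 1) {K : Set (Esp n)} (hK : K ∈ properBodies u) :
    gno u '' K ⊆ hyper u := by
  rintro _ ⟨w, hw, rfl⟩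
  exact gno_inner_left hu (hK.2.2.1 hw).2

lemma gno_image_isCompact {K : Set (Esp n)} (hK : K ∈ properBodies u) :
    IsCompact (gno u '' K) := by
  refine (properBodies_isCompact hK).image_of_continuousOn ?_
  have hc : Continuous fun w : Esp n => ⟪u, w⟫ := continuous_const.inner continuous_id
  refine ContinuousOn.sub ?_ continuousOn_const
  exact (hc.continuousOn.inv₀ fun w hw => (hK.2.2.1 hw).2.ne').smul continuousOn_id

lemma gno_image_convex (hu : ‖u‖ = 1) {K : Set (Esp n)} (hK : K ∈ properBodies u) :
    Convex ℝ (gno u '' K) := by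
  have hKsub := hK.2.2.1
  have himg : gno u '' K = (fun x => -u + x) '' (radSet K ∩ {x | ⟪u, x⟫ = 1}) := by
    ext y
    constructor
    · rintro ⟨w, hw, rfl⟩
      have ha : 0 < ⟪u, w⟫ := (hKsub hw).2
      refine ⟨(⟪u, w⟫)⁻¹ • w, ⟨⟨(⟪u, w⟫)⁻¹, (inv_pos.2 ha).le, w, hw, rfl⟩, ?_⟩, ?_⟩
      · simp only [Set.mem_setOf_eq, real_inner_smul_right]
        exact inv_mul_cancel₀ ha.ne'
      · rw [gno]; abel
    · rintro ⟨x, ⟨⟨l, hl, w, hw, rfl⟩, hx1⟩, rfl⟩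
      have ha : 0 < ⟪u, w⟫ := (hKsub hw).2
      have hx1' : l * ⟪u, w⟫ = 1 := by
        rw [Set.mem_setOf_eq, real_inner_smul_right] at hx1; exact hx1
      have hleq : l = (⟪u, w⟫)⁻¹ := eq_inv_of_mul_eq_one_left hx1'
      refine ⟨w, hw, ?_⟩
      rw [gno, hleq]; abel
  rw [himg]
  refine Convex.translate ?_ _
  refine Convex.inter hK.2.2.2 ?_
  intro x hx y hy a b ha hb hab
  simp only [Set.mem_setOf_eq] at hx hy ⊢
  rw [inner_add_right, real_inner_smul_right, real_inner_smul_right, hx, hy]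
  simpa using hab

/-- Main support-function identity. -/
lemma main_supp (hu : ‖u‖ = 1) {K : Set (Esp n)} (hK : K ∈ properBodies u)
    {v : Esp n} (hv : v ∈ equator u) :
    sphSupp u K v = Real.arctan (esupp (gno u '' K) v) ∧
    esupp (gno u '' K) v = Real.tan (sphSupp u K v) ∧
    ∀ w ∈ K, ⟪v, gno u w⟫ ≤ esupp (gno u '' K) v := by
  obtain ⟨hne, hcl, hsub, hcv⟩ := hK
  set f : Esp n → ℝ := fun w => ⟪v, w⟫ / ⟪u, w⟫ with hf
  have hKc : IsCompact K := properBodies_isCompact ⟨hne, hcl, hsub, hcv⟩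
  have hfc : ContinuousOn f K := by
    refine ContinuousOn.div ?_ ?_ fun w hw => (hsub hw).2.ne'
    · exact (continuous_const.inner continuous_id).continuousOn
    · exact (continuous_const.inner continuous_id).continuousOn
  obtain ⟨w₀, hw₀, hmax⟩ := hKc.exists_isMaxOn hne hfc
  have hG : IsGreatest (f '' K) (f w₀) :=
    ⟨Set.mem_image_of_mem _ hw₀, by rintro _ ⟨w, hw, rfl⟩; exact hmax hw⟩
  have himg1 : (fun y => ⟪v, y⟫) '' (gno u '' K) = f '' K := by
    rw [Set.image_image]
    exact Set.image_congr fun w hw => gno_inner_eq hv w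
  have hesupp : esupp (gno u '' K) v = f w₀ := by
    rw [esupp, himg1, hG.csSup_eq]
  have himg2 : (fun w => Real.sign ⟪v, w⟫ *
      Real.arccos (⟪u, w⟫ / Real.sqrt (⟪u, w⟫ ^ 2 + ⟪v, w⟫ ^ 2))) '' K
      = Real.arctan '' (f '' K) := by
    rw [Set.image_image]
    exact Set.image_congr fun w hw => aux_sign_arccos (hsub hw).2 _
  have hG2 : IsGreatest (Real.arctan '' (f '' K)) (Real.arctan (f w₀)) := by
    constructor
    · exact Set.mem_image_of_mem _ hG.1
    · rintro _ ⟨x, hx, rfl⟩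
      exact Real.arctan_strictMono.monotone (hG.2 hx)
  have hsphs : sphSupp u K v = Real.arctan (f w₀) := by
    rw [sphSupp, himg2, hG2.csSup_eq]
  refine ⟨by rw [hsphs, hesupp], by rw [hsphs, hesupp, Real.tan_arctan], ?_⟩
  intro w hw
  rw [hesupp, gno_inner_eq hv w]
  exact hmax hw

end Geo

/-- For every proper convex body `K ⊆ S_u^+` one has
`h(g_u(K), v) = tan h_u(K, v)` for all `v` in the equator `S_u`; in particular, `K` is
uniquely determined by its spherical support function. -/
theorem stmt4 {n : ℕ} (hn : 2 ≤ n) (u : Esp n) (hu : ‖u‖ = 1) :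
    (∀ K ∈ properBodies u, ∀ v ∈ equator u,
      esupp (gno u '' K) v = Real.tan (sphSupp u K v)) ∧
    (∀ K ∈ properBodies u, ∀ L ∈ properBodies u,
      (∀ v ∈ equator u, sphSupp u K v = sphSupp u L v) → K = L) := by
  constructor
  · intro K hK v hv
    exact (main_supp hu hK hv).2.1
  · -- uniqueness
    have key : ∀ K ∈ properBodies u, ∀ L ∈ properBodies u,
        (∀ v ∈ equator u, sphSupp u K v = sphSupp u L v) → K ⊆ L := by
      intro K hK L hL hsupp w hwK
      by_contra hwL
      have hwH : w ∈ openHemi u := hK.2.2.1 hwK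
      -- gno u w ∉ gno u '' L
      have hgw : gno u w ∉ gno u '' L := by
        rintro ⟨w', hw', hEq⟩
        apply hwL
        have : w' = w := by
          have h1 := gnoInv_gno hu (hL.2.2.1 hw')
          have h2 := gnoInv_gno hu hwH
          rw [← h1, hEq, h2]
        rwa [this] at hw'
      -- separate
      obtain ⟨f, c, hfc, hcf⟩ :=
        geometric_hahn_banach_closed_point (gno_image_convex hu hL)
          (gno_image_isCompact hL).isClosed hgw
      set y : Esp n := (InnerProductSpace.toDual ℝ (Esp n)).symm f with hy
      have hyf : ∀ z : Esp n, ⟪y, z⟫ = f z := fun z =>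
        InnerProductSpace.toDual_symm_apply
      set y' : Esp n := y - ⟪u, y⟫ • u with hy'
      have hy'z : ∀ z : Esp n, ⟪u, z⟫ = 0 → ⟪y', z⟫ = ⟪y, z⟫ := by
        intro z hz
        rw [hy', inner_sub_left, real_inner_smul_left, hz]
        ring
      obtain ⟨b₀, hb₀⟩ := hL.1
      have hb₀h : ⟪u, gno u b₀⟫ = 0 := gno_inner_left hu (hL.2.2.1 hb₀).2
      have hwh : ⟪u, gno u w⟫ = 0 := gno_inner_left hu hwH.2
      have hy'ne : y' ≠ 0 := by
        intro h0
        have h1 : ⟪y, gno u b₀⟫ = 0 := by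
          rw [← hy'z _ hb₀h, h0, inner_zero_left]
        have h2 : ⟪y, gno u w⟫ = 0 := by
          rw [← hy'z _ hwh, h0, inner_zero_left]
        have h3 := hfc _ (Set.mem_image_of_mem _ hb₀)
        rw [← hyf, h1] at h3
        rw [← hyf, h2] at hcf
        linarith
      set v : Esp n := ‖y'‖⁻¹ • y' with hv
      have hny' : 0 < ‖y'‖ := norm_pos_iff.2 hy'ne
      have hvE : v ∈ equator u := by
        constructor
        · rw [hv, norm_smul, Real.norm_eq_abs, abs_of_pos (inv_pos.2 hny'),
            inv_mul_cancel₀ hny'.ne']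
        · rw [hv, real_inner_smul_right, hy', inner_sub_right, real_inner_smul_right,
            real_inner_self_eq_norm_sq, hu]
          ring
      have hvz : ∀ z : Esp n, ⟪u, z⟫ = 0 → ⟪v, z⟫ = ‖y'‖⁻¹ * ⟪y, z⟫ := by
        intro z hz
        rw [hv, real_inner_smul_left, hy'z _ hz]
      -- esupp of L is < ‖y'‖⁻¹ * c
      have hLlt : esupp (gno u '' L) v ≤ ‖y'‖⁻¹ * c := by
        rw [esupp]
        refine csSup_le ((hL.1.image _).image _) ?_
        rintro _ ⟨z, ⟨b, hb, rfl⟩, rfl⟩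
        have hzh : ⟪u, gno u b⟫ = 0 := gno_inner_left hu (hL.2.2.1 hb).2
        show ⟪v, gno u b⟫ ≤ _
        rw [hvz _ hzh]
        have := hfc _ (Set.mem_image_of_mem _ hb)
        rw [← hyf] at this
        have h0c : 0 ≤ ‖y'‖⁻¹ := (inv_pos.2 hny').le
        nlinarith [inv_pos.2 hny']
      have hKge : ‖y'‖⁻¹ * c < esupp (gno u '' K) v := by
        have h1 : ⟪v, gno u w⟫ ≤ esupp (gno u '' K) v :=
          (main_supp hu hK hvE).2.2 w hwK
        have h2 : ‖y'‖⁻¹ * c < ⟪v, gno u w⟫ := by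
          rw [hvz _ hwh]
          rw [← hyf] at hcf
          nlinarith [inv_pos.2 hny']
        linarith
      have heq : esupp (gno u '' K) v = esupp (gno u '' L) v := by
        have h1 := (main_supp hu hK hvE).1
        have h2 := (main_supp hu hL hvE).1
        rw [hsupp v hvE] at h1
        exact Real.arctan_injective (h1.symm.trans h2)
      linarith
    intro K hK L hL hsupp
    exact Set.Subset.antisymm (key K hK L hL hsupp)
      (key L hL K hK fun v hv => (hsupp v hv).symm)
end
end

section
/- The gnomonic projection g_u is a homeomorphism between the space K_u^p(S^n) of proper convex bodies in the open hemisphere centered at u, equipped with the spherical Hausdorff metric δ_s, and the space K(R^n_u) of compact convex sets in R^n_u, equipped with the Euclidean Hausdorff metric δ. -/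
open scoped RealInnerProductSpace Pointwise
open Real

noncomputable section

namespace Stmt8Aux

variable {n : ℕ}

lemma inner_uu {u : Esp n} (hu : ‖u‖ = 1) : ⟪u, u⟫ = 1 := by
  rw [real_inner_self_eq_norm_sq, hu]; norm_num

lemma gno_mem_hyper {u : Esp n} (hu : ‖u‖ = 1) {v : Esp n} (hv : ⟪u, v⟫ ≠ 0) :
    ⟪u, gno u v⟫ = 0 := by
  rw [gno, inner_sub_right, real_inner_smul_right, inner_uu hu, inv_mul_cancel₀ hv, sub_self]

lemma one_le_norm_add {u : Esp n} (hu : ‖u‖ = 1) {x : Esp n} (hx : ⟪u, x⟫ = 0) :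
    1 ≤ ‖x + u‖ := by
  have h : ‖x + u‖ ^ 2 = ‖x‖ ^ 2 + 1 := by
    rw [norm_add_sq_real, real_inner_comm, hx, hu]; ring
  nlinarith [norm_nonneg (x + u), norm_nonneg x]

lemma norm_gnoInv {u : Esp n} (hu : ‖u‖ = 1) {x : Esp n} (hx : ⟪u, x⟫ = 0) :
    ‖gnoInv u x‖ = 1 := by
  have h := one_le_norm_add hu hx
  rw [gnoInv, norm_smul, norm_inv, norm_norm, inv_mul_cancel₀ (by linarith)]

lemma inner_gnoInv {u : Esp n} (hu : ‖u‖ = 1) {x : Esp n} (hx : ⟪u, x⟫ = 0) :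
    ⟪u, gnoInv u x⟫ = ‖x + u‖⁻¹ := by
  rw [gnoInv, real_inner_smul_right, inner_add_right, hx, inner_uu hu, zero_add, mul_one]

lemma gnoInv_mem_hemi {u : Esp n} (hu : ‖u‖ = 1) {x : Esp n} (hx : ⟪u, x⟫ = 0) :
    gnoInv u x ∈ openHemi u := by
  refine ⟨norm_gnoInv hu hx, ?_⟩
  rw [inner_gnoInv hu hx]
  have := one_le_norm_add hu hx
  positivity

lemma gno_gnoInv {u : Esp n} (hu : ‖u‖ = 1) {x : Esp n} (hx : ⟪u, x⟫ = 0) :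
    gno u (gnoInv u x) = x := by
  have h := one_le_norm_add hu hx
  have hne : ‖x + u‖ ≠ 0 := by linarith
  rw [gno, inner_gnoInv hu hx, inv_inv, gnoInv, smul_smul, mul_inv_cancel₀ hne, one_smul,
    add_sub_cancel_right]

lemma gnoInv_gno {u : Esp n} (hu : ‖u‖ = 1) {v : Esp n} (hv : v ∈ openHemi u) :
    gnoInv u (gno u v) = v := by
  obtain ⟨hv1, hv2⟩ := hv
  have h1 : gno u v + u = (⟪u, v⟫)⁻¹ • v := by rw [gno, sub_add_cancel]
  rw [gnoInv, h1, norm_smul, norm_inv, Real.norm_eq_abs, abs_of_pos hv2, hv1, mul_one,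
    inv_inv, smul_smul, mul_inv_cancel₀ (ne_of_gt hv2), one_smul]

end Stmt8Aux
namespace Stmt8Aux

variable {n : ℕ}

lemma norm_sub_sq_unit {a b : Esp n} (ha : ‖a‖ = 1) (hb : ‖b‖ = 1) :
    ‖a - b‖ ^ 2 = 2 - 2 * ⟪a, b⟫ := by
  rw [norm_sub_sq_real, ha, hb]; ring

lemma dist_le_sphDist {a b : Esp n} (ha : ‖a‖ = 1) (hb : ‖b‖ = 1) :
    dist a b ≤ sphDist a b := by
  have h1 : ⟪a, b⟫ ≤ 1 := by
    have := real_inner_le_norm a b; rw [ha, hb] at this; linarith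
  have h2 : -1 ≤ ⟪a, b⟫ := by
    have := abs_real_inner_le_norm a b; rw [ha, hb] at this
    have := abs_le.1 (by linarith : |⟪a, b⟫| ≤ 1); linarith [this.1]
  have hcos : Real.cos (sphDist a b) = ⟪a, b⟫ := Real.cos_arccos h2 h1
  have hθ : 0 ≤ sphDist a b := Real.arccos_nonneg _
  have hb1 : 1 - (sphDist a b) ^ 2 / 2 ≤ ⟪a, b⟫ := by
    rw [← hcos]; exact Real.one_sub_sq_div_two_le_cos
  have hsq : ‖a - b‖ ^ 2 ≤ (sphDist a b) ^ 2 := by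
    rw [norm_sub_sq_unit ha hb]; linarith
  rw [dist_eq_norm]
  nlinarith [norm_nonneg (a - b)]

lemma sphDist_le_dist {a b : Esp n} (ha : ‖a‖ = 1) (hb : ‖b‖ = 1) :
    sphDist a b ≤ π / 2 * dist a b := by
  have h1 : ⟪a, b⟫ ≤ 1 := by
    have := real_inner_le_norm a b; rw [ha, hb] at this; linarith
  have h2 : -1 ≤ ⟪a, b⟫ := by
    have := abs_real_inner_le_norm a b; rw [ha, hb] at this
    have := abs_le.1 (by linarith : |⟪a, b⟫| ≤ 1); linarith [this.1]
  have hcos : Real.cos (sphDist a b) = ⟪a, b⟫ := Real.cos_arccos h2 h1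
  have hθ : 0 ≤ sphDist a b := Real.arccos_nonneg _
  have hθπ : sphDist a b ≤ π := Real.arccos_le_pi _
  have hub : ⟪a, b⟫ ≤ 1 - 2 / π ^ 2 * (sphDist a b) ^ 2 := by
    rw [← hcos]
    exact Real.cos_le_one_sub_mul_cos_sq (by rw [abs_of_nonneg hθ]; exact hθπ)
  have hπ := Real.pi_pos
  have hsq : (sphDist a b) ^ 2 ≤ (π / 2) ^ 2 * ‖a - b‖ ^ 2 := by
    rw [norm_sub_sq_unit ha hb]
    have h3 : 2 / π ^ 2 * (sphDist a b) ^ 2 ≤ 1 - ⟪a, b⟫ := by linarith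
    have h4 : (sphDist a b) ^ 2 ≤ π ^ 2 / 2 * (1 - ⟪a, b⟫) := by
      calc (sphDist a b) ^ 2 = π ^ 2 / 2 * (2 / π ^ 2 * (sphDist a b) ^ 2) := by
            field_simp
        _ ≤ π ^ 2 / 2 * (1 - ⟪a, b⟫) :=
            mul_le_mul_of_nonneg_left h3 (by positivity)
    calc (sphDist a b) ^ 2 ≤ π ^ 2 / 2 * (1 - ⟪a, b⟫) := h4
      _ = (π / 2) ^ 2 * (2 - 2 * ⟪a, b⟫) := by ring
  rw [dist_eq_norm]
  nlinarith [norm_nonneg (a - b), mul_nonneg (le_of_lt (by positivity : (0:ℝ) < π / 2)) (norm_nonneg (a - b))]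

end Stmt8Aux
namespace Stmt8Aux

variable {n : ℕ}

lemma gnoInv_lip {u : Esp n} (hu : ‖u‖ = 1) {x y : Esp n} (hx : ⟪u, x⟫ = 0)
    (hy : ⟪u, y⟫ = 0) : ‖gnoInv u x - gnoInv u y‖ ≤ 2 * ‖x - y‖ := by
  set a := x + u with ha'
  set b := y + u with hb'
  have ha1 : 1 ≤ ‖a‖ := one_le_norm_add hu hx
  have hb1 : 1 ≤ ‖b‖ := one_le_norm_add hu hy
  have ha0 : ‖a‖ ≠ 0 := by linarith
  have hb0 : ‖b‖ ≠ 0 := by linarith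
  have hab : a - b = x - y := by rw [ha', hb']; abel
  have hdec : gnoInv u x - gnoInv u y = ‖a‖⁻¹ • (a - b) + (‖a‖⁻¹ - ‖b‖⁻¹) • b := by
    rw [gnoInv, gnoInv, ← ha', ← hb']; module
  have hn1 : ‖gnoInv u x - gnoInv u y‖ ≤ ‖a‖⁻¹ * ‖a - b‖ + |‖a‖⁻¹ - ‖b‖⁻¹| * ‖b‖ := by
    rw [hdec]
    refine (norm_add_le _ _).trans ?_
    rw [norm_smul, norm_smul, norm_inv, norm_norm, Real.norm_eq_abs]
  have h2' : |‖a‖⁻¹ - ‖b‖⁻¹| * (‖a‖ * ‖b‖) ≤ ‖a - b‖ := by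
    have hpos : (0:ℝ) < ‖a‖ * ‖b‖ := by nlinarith
    have he : (‖a‖⁻¹ - ‖b‖⁻¹) * (‖a‖ * ‖b‖) = ‖b‖ - ‖a‖ := by field_simp
    calc |‖a‖⁻¹ - ‖b‖⁻¹| * (‖a‖ * ‖b‖) = |(‖a‖⁻¹ - ‖b‖⁻¹) * (‖a‖ * ‖b‖)| := by
          rw [abs_mul, abs_of_pos hpos]
      _ = |‖b‖ - ‖a‖| := by rw [he]
      _ ≤ ‖b - a‖ := abs_norm_sub_norm_le b a
      _ = ‖a - b‖ := norm_sub_rev _ _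
  have hainv : ‖a‖⁻¹ ≤ 1 := by
    rw [inv_le_one_iff₀]; right; exact ha1
  rw [← hab]
  nlinarith [norm_nonneg (a - b), abs_nonneg (‖a‖⁻¹ - ‖b‖⁻¹),
    mul_nonneg (abs_nonneg (‖a‖⁻¹ - ‖b‖⁻¹)) (norm_nonneg b),
    mul_le_mul_of_nonneg_right hainv (norm_nonneg (a - b))]

lemma gno_lip {u : Esp n} (hu : ‖u‖ = 1) {c : ℝ} (hc : 0 < c) {v w : Esp n}
    (hw1 : ‖w‖ = 1) (hv : c ≤ ⟪u, v⟫) (hw : c ≤ ⟪u, w⟫) :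
    ‖gno u v - gno u w‖ ≤ (c⁻¹ + c⁻¹ * c⁻¹) * ‖v - w‖ := by
  set A := (⟪u, v⟫ : ℝ) with hA'
  set B := (⟪u, w⟫ : ℝ) with hB'
  have hA0 : (0:ℝ) < A := lt_of_lt_of_le hc hv
  have hB0 : (0:ℝ) < B := lt_of_lt_of_le hc hw
  have hdec : gno u v - gno u w = A⁻¹ • (v - w) + (A⁻¹ - B⁻¹) • w := by
    rw [gno, gno, ← hA', ← hB']; module
  have hn1 : ‖gno u v - gno u w‖ ≤ A⁻¹ * ‖v - w‖ + |A⁻¹ - B⁻¹| * ‖w‖ := by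
    rw [hdec]
    refine (norm_add_le _ _).trans ?_
    rw [norm_smul, norm_smul, norm_inv, Real.norm_eq_abs, Real.norm_eq_abs,
      abs_of_pos hA0]
  have hBA : |B - A| ≤ ‖v - w‖ := by
    have : B - A = ⟪u, w - v⟫ := by rw [inner_sub_right]
    rw [this]
    calc |⟪u, w - v⟫| ≤ ‖u‖ * ‖w - v‖ := abs_real_inner_le_norm u (w - v)
      _ = ‖v - w‖ := by rw [hu, one_mul, norm_sub_rev]
  have h2' : |A⁻¹ - B⁻¹| * (A * B) ≤ ‖v - w‖ := by
    have he : (A⁻¹ - B⁻¹) * (A * B) = B - A := by field_simp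
    calc |A⁻¹ - B⁻¹| * (A * B) = |(A⁻¹ - B⁻¹) * (A * B)| := by
          rw [abs_mul, abs_of_pos (mul_pos hA0 hB0)]
      _ = |B - A| := by rw [he]
      _ ≤ ‖v - w‖ := hBA
  have h2 : |A⁻¹ - B⁻¹| ≤ c⁻¹ * c⁻¹ * ‖v - w‖ := by
    have hcc : |A⁻¹ - B⁻¹| * (c * c) ≤ ‖v - w‖ := by
      refine le_trans ?_ h2'
      exact mul_le_mul_of_nonneg_left
        (mul_le_mul hv hw hc.le (by linarith)) (abs_nonneg _)
    have : c⁻¹ * c⁻¹ * ‖v - w‖ = ‖v - w‖ / (c * c) := by field_simp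
    rw [this, le_div_iff₀ (by positivity)]
    exact hcc
  have hAinv : A⁻¹ ≤ c⁻¹ := by
    apply inv_anti₀ hc hv
  calc ‖gno u v - gno u w‖ ≤ A⁻¹ * ‖v - w‖ + |A⁻¹ - B⁻¹| * ‖w‖ := hn1
    _ ≤ c⁻¹ * ‖v - w‖ + c⁻¹ * c⁻¹ * ‖v - w‖ := by
        rw [hw1, mul_one]
        exact add_le_add (mul_le_mul_of_nonneg_right hAinv (norm_nonneg _)) h2
    _ = (c⁻¹ + c⁻¹ * c⁻¹) * ‖v - w‖ := by ring

end Stmt8Aux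
namespace Stmt8Aux

variable {n : ℕ}

lemma properBodies_isCompact {u : Esp n} {K : Set (Esp n)} (hK : K ∈ properBodies u) :
    IsCompact K := by
  obtain ⟨-, hcl, hsub, -⟩ := hK
  refine Metric.isCompact_of_isClosed_isBounded hcl ?_
  refine Bornology.IsBounded.subset (Metric.isBounded_closedBall (x := (0 : Esp n)) (r := 1)) ?_
  intro v hv
  rw [Metric.mem_closedBall, dist_zero_right, (hsub hv).1]

lemma gno_continuousOn (u : Esp n) : ContinuousOn (gno u) {v : Esp n | 0 < ⟪u, v⟫} := by
  apply ContinuousOn.sub _ continuousOn_const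
  exact ContinuousOn.smul
    (((continuous_const.inner continuous_id).continuousOn : ContinuousOn (fun v : Esp n => (⟪u, v⟫ : ℝ)) {v : Esp n | 0 < ⟪u, v⟫}).inv₀ fun v hv => ne_of_gt hv)
    continuousOn_id

lemma gnoInv_continuousOn (u : Esp n) (hu : ‖u‖ = 1) :
    ContinuousOn (gnoInv u) (hyper u) := by
  have h : ContinuousOn (gnoInv u) {x : Esp n | x + u ≠ 0} :=
    ContinuousOn.smul
      (((continuous_id.add continuous_const).norm.continuousOn).inv₀
        fun x hx => norm_ne_zero_iff.2 hx)
      (continuous_id.add continuous_const).continuousOn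
  refine h.mono fun x hx => ?_
  have := one_le_norm_add hu hx
  intro h0
  rw [h0] at this
  simp at this
  linarith

lemma mapsTo_gno {u : Esp n} (hu : ‖u‖ = 1) {K : Set (Esp n)} (hK : K ∈ properBodies u) :
    gno u '' K ∈ cptCvx u := by
  obtain ⟨hne, hcl, hsub, hconv⟩ := hK
  refine ⟨hne.image _, ?_, ?_, ?_⟩
  · exact (properBodies_isCompact ⟨hne, hcl, hsub, hconv⟩).image_of_continuousOn
      ((gno_continuousOn u).mono fun v hv => (hsub hv).2)
  · -- convexity
    rintro p ⟨v, hv, rfl⟩ q ⟨w, hw, rfl⟩ t s ht hs hts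
    have hv2 := (hsub hv).2
    have hw2 := (hsub hw).2
    have hvmem : (⟪u, v⟫)⁻¹ • v ∈ radSet K :=
      ⟨(⟪u, v⟫)⁻¹, inv_nonneg.2 hv2.le, v, hv, rfl⟩
    have hwmem : (⟪u, w⟫)⁻¹ • w ∈ radSet K :=
      ⟨(⟪u, w⟫)⁻¹, inv_nonneg.2 hw2.le, w, hw, rfl⟩
    obtain ⟨l, hl, x, hx, hxy⟩ := hconv hvmem hwmem ht hs hts
    have hx2 := (hsub hx).2
    have hinner_y : ⟪u, t • (⟪u, v⟫)⁻¹ • v + s • (⟪u, w⟫)⁻¹ • w⟫ = 1 := by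
      rw [inner_add_right, real_inner_smul_right, real_inner_smul_right,
        real_inner_smul_right, real_inner_smul_right, inv_mul_cancel₀ (ne_of_gt hv2),
        inv_mul_cancel₀ (ne_of_gt hw2), mul_one, mul_one, hts]
    rw [hxy] at hinner_y
    rw [real_inner_smul_right] at hinner_y
    have hlx : l = (⟪u, x⟫)⁻¹ := eq_inv_of_mul_eq_one_left hinner_y
    refine ⟨x, hx, ?_⟩
    have h1 : gno u x = (t • (⟪u, v⟫)⁻¹ • v + s • (⟪u, w⟫)⁻¹ • w) - u := by
      rw [gno, ← hlx, ← hxy]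
    have h2 : t • gno u v + s • gno u w
        = (t • (⟪u, v⟫)⁻¹ • v + s • (⟪u, w⟫)⁻¹ • w) - (t + s) • u := by
      rw [gno, gno]; module
    rw [h1, h2, hts, one_smul]
  · rintro p ⟨v, hv, rfl⟩
    exact gno_mem_hyper hu (ne_of_gt (hsub hv).2)

end Stmt8Aux
namespace Stmt8Aux

variable {n : ℕ}

lemma roundtrip {u : Esp n} (hu : ‖u‖ = 1) {K : Set (Esp n)} (hK : K ⊆ openHemi u) :
    gnoInv u '' (gno u '' K) = K := by
  rw [Set.image_image]
  rw [Set.image_congr (fun v hv => gnoInv_gno hu (hK hv))]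
  exact Set.image_id _

lemma roundtrip' {u : Esp n} (hu : ‖u‖ = 1) {C : Set (Esp n)} (hC : C ⊆ hyper u) :
    gno u '' (gnoInv u '' C) = C := by
  rw [Set.image_image]
  rw [Set.image_congr (fun x hx => gno_gnoInv hu (hC hx))]
  exact Set.image_id _

lemma gnoInv_image_proper {u : Esp n} (hu : ‖u‖ = 1) {C : Set (Esp n)}
    (hC : C ∈ cptCvx u) : gnoInv u '' C ∈ properBodies u := by
  obtain ⟨hCne, hCc, hCcvx, hCsub⟩ := hC
  refine ⟨hCne.image _, ?_, ?_, ?_⟩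
  · exact (hCc.image_of_continuousOn ((gnoInv_continuousOn u hu).mono hCsub)).isClosed
  · rintro p ⟨x, hx, rfl⟩
    exact gnoInv_mem_hemi hu (hCsub hx)
  · -- spherical convexity
    rintro y₁ ⟨l₁, hl₁, z₁, ⟨x₁, hx₁, rfl⟩, rfl⟩ y₂ ⟨l₂, hl₂, z₂, ⟨x₂, hx₂, rfl⟩, rfl⟩
      t s ht hs hts
    have h₁ := one_le_norm_add hu (hCsub hx₁)
    have h₂ := one_le_norm_add hu (hCsub hx₂)
    have hn₁ : ‖x₁ + u‖ ≠ 0 := by linarith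
    have hn₂ : ‖x₂ + u‖ ≠ 0 := by linarith
    set m₁ := l₁ * ‖x₁ + u‖⁻¹ with hm₁
    set m₂ := l₂ * ‖x₂ + u‖⁻¹ with hm₂
    have hm₁0 : 0 ≤ m₁ := mul_nonneg hl₁ (by positivity)
    have hm₂0 : 0 ≤ m₂ := mul_nonneg hl₂ (by positivity)
    have hy₁ : t • l₁ • gnoInv u x₁ + s • l₂ • gnoInv u x₂
        = (t * m₁) • (x₁ + u) + (s * m₂) • (x₂ + u) := by
      rw [gnoInv, gnoInv, hm₁, hm₂, smul_smul, smul_smul, smul_smul, smul_smul]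
      ring_nf
    rcases eq_or_lt_of_le (by positivity : (0:ℝ) ≤ t * m₁ + s * m₂) with hz | hz
    · -- degenerate: the combination is 0
      have ht0 : t * m₁ = 0 := by nlinarith [mul_nonneg ht hm₁0, mul_nonneg hs hm₂0]
      have hs0 : s * m₂ = 0 := by nlinarith [mul_nonneg ht hm₁0, mul_nonneg hs hm₂0]
      refine ⟨0, le_refl 0, gnoInv u x₁, ⟨x₁, hx₁, rfl⟩, ?_⟩
      rw [hy₁, ht0, hs0, zero_smul, zero_smul, zero_smul, add_zero]
    · -- nondegenerate
      set S := t * m₁ + s * m₂ with hS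
      have hSne : S ≠ 0 := ne_of_gt hz
      set x₀ := (t * m₁ / S) • x₁ + (s * m₂ / S) • x₂ with hx₀
      have hx₀C : x₀ ∈ C := hCcvx hx₁ hx₂ (by positivity) (by positivity)
        (by field_simp; exact hS.symm)
      have h₀ := one_le_norm_add hu (hCsub hx₀C)
      have hn₀ : ‖x₀ + u‖ ≠ 0 := by linarith
      refine ⟨S * ‖x₀ + u‖, by positivity, gnoInv u x₀, ⟨x₀, hx₀C, rfl⟩, ?_⟩
      rw [hy₁, gnoInv, smul_smul, mul_assoc, mul_inv_cancel₀ hn₀, mul_one, hx₀]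
      match_scalars <;> (rw [hS]; field_simp [show t * m₁ + s * m₂ ≠ 0 from hSne])

lemma bijOn_gno {u : Esp n} (hu : ‖u‖ = 1) :
    Set.BijOn (fun K => gno u '' K) (properBodies u) (cptCvx u) := by
  refine ⟨fun K hK => mapsTo_gno hu hK, ?_, ?_⟩
  · intro K hK L hL h
    rw [← roundtrip hu hK.2.2.1, ← roundtrip hu hL.2.2.1]
    simp only at h
    rw [h]
  · intro C hC
    exact ⟨gnoInv u '' C, gnoInv_image_proper hu hC, roundtrip' hu hC.2.2.2⟩

end Stmt8Aux
namespace Stmt8Aux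

variable {n : ℕ}

lemma sphDist_le_pi (x y : Esp n) : sphDist x y ≤ π := Real.arccos_le_pi _

lemma part2 {u : Esp n} (hu : ‖u‖ = 1) {K : Set (Esp n)} (hK : K ∈ properBodies u)
    {ε : ℝ} (hε : 0 < ε) :
    ∃ r > 0, ∀ L ∈ properBodies u, sphHaus K L < r →
      Metric.hausdorffDist (gno u '' K) (gno u '' L) < ε := by
  obtain ⟨hne, hcl, hsub, hconv⟩ := hK
  have hKc : IsCompact K := properBodies_isCompact ⟨hne, hcl, hsub, hconv⟩
  obtain ⟨v₀, hv₀K, hv₀min⟩ := hKc.exists_isMinOn hne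
    ((continuous_const.inner continuous_id).continuousOn :
      ContinuousOn (fun v : Esp n => (⟪u, v⟫ : ℝ)) K)
  set c := (⟪u, v₀⟫ : ℝ) with hc'
  have hc : 0 < c := (hsub hv₀K).2
  have hcK : ∀ v ∈ K, c ≤ ⟪u, v⟫ := fun v hv => isMinOn_iff.mp hv₀min v hv
  set Λ := (c/2)⁻¹ + (c/2)⁻¹ * (c/2)⁻¹ with hΛ'
  have hΛ0 : 0 < Λ := by positivity
  refine ⟨min (c/2) (ε/(2*Λ)), by positivity, fun L hL hLr => ?_⟩
  obtain ⟨hLne, hLcl, hLsub, -⟩ := hL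
  unfold sphHaus at hLr
  have hmem : π ∈ {r : ℝ | 0 ≤ r ∧ (∀ a ∈ K, ∃ b ∈ L, sphDist a b ≤ r) ∧
      (∀ b ∈ L, ∃ a ∈ K, sphDist a b ≤ r)} :=
    ⟨Real.pi_nonneg, fun a _ => ⟨hLne.some, hLne.some_mem, sphDist_le_pi a _⟩,
      fun b _ => ⟨hne.some, hne.some_mem, sphDist_le_pi _ b⟩⟩
  obtain ⟨s, ⟨hs0, hcov1, hcov2⟩, hsr⟩ := exists_lt_of_csInf_lt ⟨π, hmem⟩ hLr
  have hsr2 : s < c/2 := lt_of_lt_of_le hsr (min_le_left _ _)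
  have hLhemi : ∀ w ∈ L, c/2 ≤ ⟪u, w⟫ := by
    intro w hw
    obtain ⟨a, haK, hd⟩ := hcov2 w hw
    have h1 : ‖a - w‖ ≤ s := by
      have := dist_le_sphDist (hsub haK).1 (hLsub hw).1
      rw [dist_eq_norm] at this
      linarith
    have h2 : |(⟪u, a - w⟫ : ℝ)| ≤ ‖a - w‖ := by
      have := abs_real_inner_le_norm u (a - w)
      rwa [hu, one_mul] at this
    have h3 : (⟪u, w⟫ : ℝ) = ⟪u, a⟫ - ⟪u, a - w⟫ := by
      rw [inner_sub_right]; ring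
    have h4 := abs_le.1 h2
    have h5 := hcK a haK
    rw [h3]
    linarith [h4.2]
  have hKhemi : ∀ v ∈ K, c/2 ≤ ⟪u, v⟫ := fun v hv => by linarith [hcK v hv]
  have hmain : Metric.hausdorffDist (gno u '' K) (gno u '' L) ≤ Λ * s := by
    apply Metric.hausdorffDist_le_of_mem_dist (by positivity)
    · rintro _ ⟨v, hv, rfl⟩
      obtain ⟨b, hb, hd⟩ := hcov1 v hv
      refine ⟨gno u b, ⟨b, hb, rfl⟩, ?_⟩
      have hlip := gno_lip hu (by positivity : (0:ℝ) < c/2) (hLsub hb).1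
        (hKhemi v hv) (hLhemi b hb)
      have hvb : ‖v - b‖ ≤ s := by
        have := dist_le_sphDist (hsub hv).1 (hLsub hb).1
        rw [dist_eq_norm] at this
        linarith
      rw [← hΛ'] at hlip
      rw [dist_eq_norm]
      calc ‖gno u v - gno u b‖ ≤ Λ * ‖v - b‖ := hlip
        _ ≤ Λ * s := mul_le_mul_of_nonneg_left hvb hΛ0.le
    · rintro _ ⟨w, hw, rfl⟩
      obtain ⟨a, ha, hd⟩ := hcov2 w hw
      refine ⟨gno u a, ⟨a, ha, rfl⟩, ?_⟩
      have hlip := gno_lip hu (by positivity : (0:ℝ) < c/2) (hLsub hw).1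
        (hKhemi a ha) (hLhemi w hw)
      -- hlip : ‖gno u a - gno u w‖ ≤ ((c/2)⁻¹ + (c/2)⁻¹*(c/2)⁻¹) * ‖a - w‖
      have hvb : ‖a - w‖ ≤ s := by
        have := dist_le_sphDist (hsub ha).1 (hLsub hw).1
        rw [dist_eq_norm] at this
        linarith
      rw [← hΛ'] at hlip
      rw [dist_eq_norm, norm_sub_rev]
      calc ‖gno u a - gno u w‖ ≤ Λ * ‖a - w‖ := hlip
        _ ≤ Λ * s := mul_le_mul_of_nonneg_left hvb hΛ0.le
  have hfin : Λ * s < ε := by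
    have h6 : s < ε/(2*Λ) := lt_of_lt_of_le hsr (min_le_right _ _)
    have h8 : Λ * (ε/(2*Λ)) = ε/2 := by
      rw [eq_div_iff (by norm_num : (2:ℝ) ≠ 0)]
      field_simp
    have h7 : Λ * s < ε/2 := by
      rw [← h8]
      exact mul_lt_mul_of_pos_left h6 hΛ0
    exact h7.trans (by linarith)
  linarith

end Stmt8Aux
namespace Stmt8Aux

variable {n : ℕ}

lemma part3 {u : Esp n} (hu : ‖u‖ = 1) {K : Set (Esp n)} (hK : K ∈ properBodies u)
    {ε : ℝ} (hε : 0 < ε) :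
    ∃ r > 0, ∀ L ∈ properBodies u,
      Metric.hausdorffDist (gno u '' K) (gno u '' L) < r → sphHaus K L < ε := by
  have hπ := Real.pi_pos
  refine ⟨ε/(2*π), by positivity, fun L hL hd => ?_⟩
  have hKc : IsCompact (gno u '' K) :=
    (properBodies_isCompact hK).image_of_continuousOn
      ((gno_continuousOn u).mono fun v hv => (hK.2.2.1 hv).2)
  have hLc : IsCompact (gno u '' L) :=
    (properBodies_isCompact hL).image_of_continuousOn
      ((gno_continuousOn u).mono fun v hv => (hL.2.2.1 hv).2)
  have hedist : EMetric.hausdorffEdist (gno u '' K) (gno u '' L) ≠ ⊤ :=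
    Metric.hausdorffEdist_ne_top_of_nonempty_of_bounded (hK.1.image _) (hL.1.image _)
      hKc.isBounded hLc.isBounded
  have key : ∀ a ∈ K, ∀ b ∈ L, dist (gno u a) (gno u b) < ε/(2*π) →
      sphDist a b ≤ ε/2 := by
    intro a ha b hb hdd
    have hha := hK.2.2.1 ha
    have hhb := hL.2.2.1 hb
    have h1 : ‖a - b‖ ≤ 2 * ‖gno u a - gno u b‖ := by
      have := gnoInv_lip hu (gno_mem_hyper hu (ne_of_gt hha.2))
        (gno_mem_hyper hu (ne_of_gt hhb.2))
      rwa [gnoInv_gno hu hha, gnoInv_gno hu hhb] at this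
    have h2 := sphDist_le_dist hha.1 hhb.1
    rw [dist_eq_norm] at hdd h2
    have h3 : ‖a - b‖ ≤ 2 * (ε/(2*π)) := by linarith
    calc sphDist a b ≤ π/2 * ‖a - b‖ := h2
      _ ≤ π/2 * (2 * (ε/(2*π))) := mul_le_mul_of_nonneg_left h3 (by positivity)
      _ = ε/2 := by field_simp
  have hmem : (ε/2) ∈ {r : ℝ | 0 ≤ r ∧ (∀ a ∈ K, ∃ b ∈ L, sphDist a b ≤ r) ∧
      (∀ b ∈ L, ∃ a ∈ K, sphDist a b ≤ r)} := by
    refine ⟨by positivity, ?_, ?_⟩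
    · intro a ha
      obtain ⟨y, hy, hdy⟩ := Metric.exists_dist_lt_of_hausdorffDist_lt
        (Set.mem_image_of_mem _ ha) hd hedist
      obtain ⟨b, hb, rfl⟩ := hy
      exact ⟨b, hb, key a ha b hb hdy⟩
    · intro b hb
      obtain ⟨y, hy, hdy⟩ := Metric.exists_dist_lt_of_hausdorffDist_lt'
        (Set.mem_image_of_mem _ hb) hd hedist
      obtain ⟨a, ha, rfl⟩ := hy
      exact ⟨a, ha, key a ha b hb hdy⟩
  have hle : sphHaus K L ≤ ε/2 := csInf_le ⟨0, fun x hx => hx.1⟩ hmem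
  linarith

end Stmt8Aux


/-- The gnomonic projection is a homeomorphism between
`(K_u^p(S^n), δ_s)` and `(K(ℝ^n_u), δ)`: it is a bijection which is continuous in both
directions with respect to the two Hausdorff metrics. -/
theorem stmt8 {n : ℕ} (hn : 2 ≤ n) (u : Esp n) (hu : ‖u‖ = 1) :
    Set.BijOn (fun K => gno u '' K) (properBodies u) (cptCvx u) ∧
    (∀ K ∈ properBodies u, ∀ ε : ℝ, 0 < ε → ∃ r > 0, ∀ L ∈ properBodies u,
      sphHaus K L < r → Metric.hausdorffDist (gno u '' K) (gno u '' L) < ε) ∧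
    (∀ K ∈ properBodies u, ∀ ε : ℝ, 0 < ε → ∃ r > 0, ∀ L ∈ properBodies u,
      Metric.hausdorffDist (gno u '' K) (gno u '' L) < r → sphHaus K L < ε) := by
  exact ⟨Stmt8Aux.bijOn_gno hu,
    fun _ hK _ hε => Stmt8Aux.part2 hu hK hε,
    fun _ hK _ hε => Stmt8Aux.part3 hu hK hε⟩
end
end

section
/- If an operation * : C → K^p(S^n) is projection covariant (where C is the set of pairs (K,L) of proper spherical convex bodies contained together in some open hemisphere), then either K*L ⊆ conv(K ∪ L) for all (K,L) ∈ C, or K*L ⊆ −conv(K ∪ L) for all (K,L) ∈ C. -/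
open scoped RealInnerProductSpace Pointwise
open Real

noncomputable section

section Aux
variable {n : ℕ}

lemma mem_radSet_self {A : Set (Esp n)} {x : Esp n} (hx : x ∈ A) : x ∈ radSet A :=
  ⟨1, zero_le_one, x, hx, (one_smul ℝ x).symm⟩

lemma radSet_singleton (v : Esp n) : radSet ({v} : Set (Esp n)) = (fun l : ℝ => l • v) '' (Set.Ici 0) := by
  ext y
  constructor
  · rintro ⟨l, hl, x, hx, rfl⟩
    rw [Set.mem_singleton_iff] at hx
    exact ⟨l, hl, by rw [hx]⟩
  · rintro ⟨l, hl, rfl⟩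
    exact ⟨l, hl, v, rfl, rfl⟩

lemma sphConvex_singleton (v : Esp n) : SphConvex ({v} : Set (Esp n)) := by
  rw [SphConvex, radSet_singleton]
  exact (convex_Ici (0:ℝ)).is_linear_image (IsLinearMap.isLinearMap_smul' v)

lemma singleton_properBodies {u : Esp n} (hu : ‖u‖ = 1) : ({u} : Set (Esp n)) ∈ properBodies u :=
  ⟨Set.singleton_nonempty u, isClosed_singleton,
    by
      intro x hx
      rw [Set.mem_singleton_iff] at hx
      rw [hx]
      exact ⟨hu, by rw [real_inner_self_eq_norm_sq, hu]; norm_num⟩,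
    sphConvex_singleton u⟩

lemma unit_ne_zero {u : Esp n} (hu : ‖u‖ = 1) : u ≠ 0 := by
  intro h; rw [h, norm_zero] at hu; norm_num at hu

lemma proj_span_apply {u : Esp n} (hu : ‖u‖ = 1) (z : Esp n) :
    ((ℝ ∙ u).orthogonalProjection z : Esp n) = ⟪u, z⟫ • u := by
  exact Submodule.starProjection_unit_singleton ℝ hu z

/-- Lemma A: spherical projection onto the great 0-sphere `{±u}` of a set inside the
open hemisphere at `u` is `{u}`. -/
lemma sphProj_span_self {u : Esp n} (hu : ‖u‖ = 1) {K : Set (Esp n)} (hne : K.Nonempty)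
    (hK : K ⊆ openHemi u) : sphProj (ℝ ∙ u) K = {u} := by
  ext y
  constructor
  · rintro ⟨hy1, hy2⟩
    obtain ⟨z, ⟨l, hl, x, hx, rfl⟩, hyz⟩ := hy1
    dsimp only at hyz
    rw [proj_span_apply hu, real_inner_smul_right] at hyz
    have hy2' : ‖(l * ⟪u, x⟫) • u‖ = 1 := by rw [hyz]; exact hy2
    rw [norm_smul, hu, mul_one, Real.norm_eq_abs] at hy2'
    have hpos : 0 ≤ l * ⟪u, x⟫ := mul_nonneg hl (le_of_lt (hK hx).2)
    have h1 : l * ⟪u, x⟫ = 1 := by rwa [abs_of_nonneg hpos] at hy2'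
    rw [← hyz, h1, one_smul]; rfl
  · intro hy
    have hy' : y = u := hy
    rw [hy']
    obtain ⟨x, hx⟩ := hne
    have hpos : 0 < ⟪u, x⟫ := (hK hx).2
    refine ⟨⟨(⟪u, x⟫)⁻¹ • x, ⟨(⟪u, x⟫)⁻¹, by positivity, x, hx, rfl⟩, ?_⟩, hu⟩
    dsimp only
    rw [proj_span_apply hu, real_inner_smul_right, inv_mul_cancel₀ (ne_of_gt hpos), one_smul]

end Aux
section Key
variable {n : ℕ} (op : Set (Esp n) → Set (Esp n) → Set (Esp n))

/-- Key consequence of projection covariance with `V = ℝ∙u`. -/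
lemma key0 (hn : 2 ≤ n) (hcov : projCovariantC op) {u : Esp n} (hu : ‖u‖ = 1)
    {K L : Set (Esp n)} (hK : K ∈ properBodies u) (hL : L ∈ properBodies u) :
    sphProj (ℝ ∙ u) (op K L) = op {u} {u} := by
  have h := hcov u hu (ℝ ∙ u) (Submodule.mem_span_singleton_self u)
    (by rw [finrank_span_singleton (unit_ne_zero hu)]; omega) K hK L hL
  rw [sphProj_span_self hu hK.1 hK.2.2.1, sphProj_span_self hu hL.1 hL.2.2.1] at h
  exact h.symm

lemma singleton_pairsC {u : Esp n} (hu : ‖u‖ = 1) :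
    (({u}, ({u} : Set (Esp n))) : Set (Esp n) × Set (Esp n)) ∈ pairsC n :=
  ⟨u, hu, singleton_properBodies hu, singleton_properBodies hu⟩

/-- Dichotomy: `op {u} {u}` is `{u}` or `{-u}`. -/
lemma key1 (hn : 2 ≤ n) (hmap : ∀ p ∈ pairsC n, op p.1 p.2 ∈ allProperBodies n)
    (hcov : projCovariantC op) {u : Esp n} (hu : ‖u‖ = 1) :
    op {u} {u} = {u} ∨ op {u} {u} = {-u} := by
  have hfix : sphProj (ℝ ∙ u) (op {u} {u}) = op {u} {u} :=
    key0 op hn hcov hu (singleton_properBodies hu) (singleton_properBodies hu)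
  obtain ⟨w₀, hw₀, hMne, -, hMh, -⟩ := hmap ({u}, {u}) (singleton_pairsC hu)
  set M := op {u} {u} with hM
  have helem : ∀ y ∈ M, y = u ∨ y = -u := by
    intro y hy
    rw [← hfix] at hy
    obtain ⟨⟨z, hz, hyz⟩, hy2⟩ := hy
    dsimp only at hyz
    rw [proj_span_apply hu] at hyz
    have : ‖(⟪u, z⟫) • u‖ = 1 := by rw [hyz]; exact hy2
    rw [norm_smul, hu, mul_one, Real.norm_eq_abs] at this
    rcases abs_eq (by norm_num : (0:ℝ) ≤ 1) |>.1 this with h | h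
    · left; rw [← hyz, h, one_smul]
    · right; rw [← hyz, h, neg_one_smul]
  have hnotboth : ¬ (u ∈ M ∧ -u ∈ M) := by
    rintro ⟨h1, h2⟩
    have p1 : 0 < ⟪w₀, u⟫ := (hMh h1).2
    have p2 : 0 < ⟪w₀, -u⟫ := (hMh h2).2
    rw [inner_neg_right] at p2
    linarith
  obtain ⟨m, hm⟩ := hMne
  rcases helem m hm with rfl | rfl
  · left
    apply Set.eq_singleton_iff_unique_mem.2 ⟨hm, ?_⟩
    intro y hy
    rcases helem y hy with rfl | rfl
    · rfl
    · exact absurd ⟨hm, hy⟩ hnotboth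
  · right
    apply Set.eq_singleton_iff_unique_mem.2 ⟨hm, ?_⟩
    intro y hy
    rcases helem y hy with rfl | rfl
    · exact absurd ⟨hy, hm⟩ hnotboth
    · rfl

end Key
section Key2
variable {n : ℕ} (op : Set (Esp n) → Set (Esp n) → Set (Esp n))

lemma singleton_properBodies' {v x : Esp n} (hx : ‖x‖ = 1) (hvx : 0 < ⟪v, x⟫) :
    ({x} : Set (Esp n)) ∈ properBodies v :=
  ⟨Set.singleton_nonempty x, isClosed_singleton,
    by
      intro y hy
      rw [Set.mem_singleton_iff] at hy
      rw [hy]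
      exact ⟨hx, hvx⟩,
    sphConvex_singleton x⟩

lemma span_neg_singleton (v : Esp n) : (ℝ ∙ (-v)) = (ℝ ∙ v) := by
  rw [show ({-v} : Set (Esp n)) = -{v} by simp, Submodule.span_neg]

lemma neg_singleton_ne {u : Esp n} (hu : ‖u‖ = 1) : ({-u} : Set (Esp n)) ≠ {u} := by
  intro h
  have : -u = u := by rw [← Set.mem_singleton_iff, ← h]; rfl
  have hz : u = 0 := by
    have h2 : u + u = 0 := by nth_rewrite 1 [← this]; exact neg_add_cancel u
    have h3 : (2:ℝ) • u = 0 := by rw [two_smul]; exact h2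
    simpa using smul_eq_zero.mp h3
  exact unit_ne_zero hu hz

/-- Transfer: the sign of `op {u}{u}` agrees at `u` and `v` whenever `⟪v, u⟫ > 0`. -/
lemma key2 (hn : 2 ≤ n) (hmap : ∀ p ∈ pairsC n, op p.1 p.2 ∈ allProperBodies n)
    (hcov : projCovariantC op) {u v : Esp n} (hu : ‖u‖ = 1) (hv : ‖v‖ = 1)
    (huv : 0 < ⟪v, u⟫) : (op {u} {u} = {u} ↔ op {v} {v} = {v}) := by
  have hKv : ({u} : Set (Esp n)) ∈ properBodies v := singleton_properBodies' hu huv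
  have h := key0 op hn hcov hv hKv hKv
  rcases key1 op hn hmap hcov hu with h1 | h1
  · rw [h1] at h
    rw [sphProj_span_self hv (Set.singleton_nonempty u)
      (by intro y hy; rw [Set.mem_singleton_iff] at hy; rw [hy]; exact ⟨hu, huv⟩)] at h
    exact iff_of_true h1 h.symm
  · rw [h1] at h
    have hsp : sphProj (ℝ ∙ v) ({-u} : Set (Esp n)) = {-v} := by
      rw [← span_neg_singleton v]
      apply sphProj_span_self (by rw [norm_neg]; exact hv) (Set.singleton_nonempty _)
      intro y hy
      rw [Set.mem_singleton_iff] at hy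
      rw [hy]
      refine ⟨by rw [norm_neg]; exact hu, ?_⟩
      rw [inner_neg_neg]
      exact huv
    rw [hsp] at h
    constructor
    · intro hc; exact absurd (h1 ▸ hc : ({-u} : Set (Esp n)) = {u}) (neg_singleton_ne hu)
    · intro hc; exact absurd (h ▸ hc : ({-v} : Set (Esp n)) = {v}) (neg_singleton_ne hv)

end Key2
section Key3
variable {n : ℕ} (op : Set (Esp n) → Set (Esp n) → Set (Esp n))

lemma normalize_unit {w : Esp n} (hw : w ≠ 0) : ‖(‖w‖⁻¹ • w)‖ = 1 := by
  rw [norm_smul, norm_inv, norm_norm]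
  exact inv_mul_cancel₀ (norm_ne_zero_iff.2 hw)

lemma inner_normalize_pos {w a : Esp n} (hw : w ≠ 0) (h : 0 < ⟪w, a⟫) :
    0 < ⟪(‖w‖⁻¹ • w), a⟫ := by
  rw [real_inner_smul_left]
  exact mul_pos (inv_pos.2 (norm_pos_iff.2 hw)) h

lemma exists_orth_unit (hn : 2 ≤ n) (u : Esp n) : ∃ e : Esp n, ‖e‖ = 1 ∧ ⟪u, e⟫ = 0 := by
  have hlt : Module.finrank ℝ (ℝ ∙ u) < Module.finrank ℝ (Esp n) := by
    have h1 : Module.finrank ℝ (ℝ ∙ u) ≤ 1 := by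
      rcases eq_or_ne u 0 with rfl | hu0
      · rw [Submodule.span_zero_singleton]; simp
      · rw [finrank_span_singleton hu0]
    have h2 : Module.finrank ℝ (Esp n) = n + 1 := finrank_euclideanSpace_fin
    omega
  obtain ⟨z, hz⟩ := Submodule.exists_of_finrank_lt (ℝ ∙ u) hlt
  have hznot : z ∉ (ℝ ∙ u) := by
    have := hz 1 one_ne_zero
    simpa using this
  set e' : Esp n := z - ⟪u, u⟫⁻¹ • ⟪u, z⟫ • u with he'
  have he'0 : e' ≠ 0 := by
    intro h
    apply hznot
    have : z = ⟪u, u⟫⁻¹ • ⟪u, z⟫ • u := by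
      have := sub_eq_zero.mp h
      exact this
    rw [this]
    exact Submodule.smul_mem _ _ (Submodule.smul_mem _ _ (Submodule.mem_span_singleton_self u))
  have horth : ⟪u, e'⟫ = 0 := by
    rcases eq_or_ne u 0 with rfl | hu0
    · simp
    · rw [he', inner_sub_right, real_inner_smul_right, real_inner_smul_right]
      rw [real_inner_self_eq_norm_sq]
      have hnu : ‖u‖ ^ 2 ≠ 0 := pow_ne_zero 2 (norm_ne_zero_iff.2 hu0)
      field_simp
      ring
  refine ⟨‖e'‖⁻¹ • e', normalize_unit he'0, ?_⟩
  rw [real_inner_smul_right, horth, mul_zero]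

/-- Global constancy of the sign. -/
lemma key3 (hn : 2 ≤ n) (hmap : ∀ p ∈ pairsC n, op p.1 p.2 ∈ allProperBodies n)
    (hcov : projCovariantC op) {u v : Esp n} (hu : ‖u‖ = 1) (hv : ‖v‖ = 1) :
    (op {u} {u} = {u} ↔ op {v} {v} = {v}) := by
  have step : ∀ a b : Esp n, ‖a‖ = 1 → ‖b‖ = 1 → 0 < ⟪b, a⟫ →
      (op {a} {a} = {a} ↔ op {b} {b} = {b}) := fun a b ha hb hab =>
    key2 op hn hmap hcov ha hb hab
  -- chain through the midpoint, or through an orthogonal detour if v = -u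
  have main : ∀ a b : Esp n, ‖a‖ = 1 → ‖b‖ = 1 → a + b ≠ 0 →
      (op {a} {a} = {a} ↔ op {b} {b} = {b}) := by
    intro a b ha hb hab
    set w := a + b with hw
    have hw2 : ‖w‖ ^ 2 = 2 + 2 * ⟪a, b⟫ := by
      rw [← real_inner_self_eq_norm_sq, hw, real_inner_add_add_self, real_inner_self_eq_norm_sq,
        real_inner_self_eq_norm_sq, ha, hb]
      ring
    have hpos : 0 < 1 + ⟪a, b⟫ := by
      have : 0 < ‖w‖ ^ 2 := pow_pos (norm_pos_iff.2 hab) 2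
      nlinarith
    have hwa : 0 < ⟪w, a⟫ := by
      rw [hw, inner_add_left, real_inner_self_eq_norm_sq, ha, real_inner_comm]
      nlinarith
    have hwb : 0 < ⟪w, b⟫ := by
      rw [hw, inner_add_left, real_inner_self_eq_norm_sq, hb]
      nlinarith
    have h1 := step a (‖w‖⁻¹ • w) ha (normalize_unit hab) (inner_normalize_pos hab hwa)
    have h2 := step b (‖w‖⁻¹ • w) hb (normalize_unit hab) (inner_normalize_pos hab hwb)
    exact h1.trans h2.symm
  rcases eq_or_ne (u + v) 0 with huv | huv
  · -- v = -u : go through an orthogonal unit vector e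
    have hv' : v = -u := by rw [eq_neg_iff_add_eq_zero, add_comm]; exact huv
    obtain ⟨e, he, hue⟩ := exists_orth_unit hn u
    have h1 : u + e ≠ 0 := by
      intro h
      have : ⟪u, u + e⟫ = 0 := by rw [h, inner_zero_right]
      rw [inner_add_right, hue, add_zero, real_inner_self_eq_norm_sq, hu] at this
      norm_num at this
    have hue' : ⟪e, u⟫ = 0 := by rw [real_inner_comm]; exact hue
    have h2 : e + v ≠ 0 := by
      intro h
      have : ⟪e, e + v⟫ = 0 := by rw [h, inner_zero_right]
      rw [inner_add_right, hv', inner_neg_right, hue',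
        real_inner_self_eq_norm_sq, he] at this
      norm_num at this
    exact (main u e hu he h1).trans (main e v he hv h2)
  · exact main u v hu hv huv

end Key3
section Cara

/-- Convex hull of a compact set in a finite-dimensional normed space is compact. -/
lemma isCompact_convexHull_fd {E : Type*} [NormedAddCommGroup E] [NormedSpace ℝ E]
    [FiniteDimensional ℝ E] {s : Set E} (hs : IsCompact s) :
    IsCompact (convexHull ℝ s) := by
  classical
  rcases s.eq_empty_or_nonempty with rfl | hne
  · simp
  set m := Module.finrank ℝ E + 2 with hm
  set f : (Fin m → ℝ) × (Fin m → E) → E := fun q => ∑ i, q.1 i • q.2 i with hf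
  have hfc : Continuous f := by
    apply continuous_finset_sum
    intro i _
    exact ((continuous_apply i).comp continuous_fst).smul
      ((continuous_apply i).comp continuous_snd)
  set A : Set ((Fin m → ℝ) × (Fin m → E)) :=
    (stdSimplex ℝ (Fin m)) ×ˢ (Set.univ.pi fun _ : Fin m => s) with hA
  have hAc : IsCompact A := (isCompact_stdSimplex ℝ (Fin m)).prod (isCompact_univ_pi fun _ => hs)
  have himg : convexHull ℝ s = f '' A := by
    apply Set.Subset.antisymm
    · intro x hx
      obtain ⟨ι, hι, z, w, hzs, hind, hwpos, hwsum, hcomb⟩ :=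
        eq_pos_convex_span_of_mem_convexHull hx
      haveI : Nonempty ι := by
        by_contra h
        rw [not_nonempty_iff] at h
        rw [Finset.univ_eq_empty, Finset.sum_empty] at hwsum
        norm_num at hwsum
      have hcard : Fintype.card ι ≤ m := by
        have h1 := hind.card_le_finrank_succ
        have h2 : Module.finrank ℝ (vectorSpan ℝ (Set.range z)) ≤ Module.finrank ℝ E :=
          Submodule.finrank_le _
        omega
      obtain ⟨e⟩ : Nonempty (ι ↪ Fin m) :=
        Function.Embedding.nonempty_of_card_le (by simpa using hcard)
      set w' : Fin m → ℝ := fun j => if h : ∃ i, e i = j then w h.choose else 0 with hw'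
      set z' : Fin m → E := fun j => if h : ∃ i, e i = j then z h.choose
        else z (Classical.arbitrary ι) with hz'
      have hw'e : ∀ i, w' (e i) = w i := by
        intro i
        have h : ∃ i', e i' = e i := ⟨i, rfl⟩
        simp only [hw']
        rw [dif_pos h]
        congr 1
        exact e.injective h.choose_spec
      have hz'e : ∀ i, z' (e i) = z i := by
        intro i
        have h : ∃ i', e i' = e i := ⟨i, rfl⟩
        simp only [hz']
        rw [dif_pos h]
        congr 1
        exact e.injective h.choose_spec
      have hgen : ∀ g : Fin m → E, (∀ j, (¬ ∃ i, e i = j) → g j = 0) →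
          (∀ i, g (e i) = (fun j => g j) (e i)) → True := fun _ _ _ => trivial
      have hsum : ∀ (g : Fin m → E), (∀ j, j ∉ Finset.univ.image e → g j = 0) →
          ∑ j, g j = ∑ i, g (e i) := by
        intro g hg
        rw [← Finset.sum_subset (Finset.subset_univ (Finset.univ.image e)) (fun j _ hj => hg j hj)]
        rw [Finset.sum_image (fun a _ b _ h => e.injective h)]
      have hnotin : ∀ j : Fin m, j ∉ Finset.univ.image e → ¬ ∃ i, e i = j := by
        intro j hj ⟨i, hi⟩
        exact hj (Finset.mem_image.2 ⟨i, Finset.mem_univ i, hi⟩)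
      refine ⟨(w', z'), ⟨⟨?_, ?_⟩, ?_⟩, ?_⟩
      · intro j
        simp only [hw']
        split
        · exact le_of_lt (hwpos _)
        · exact le_refl 0
      · -- sum of w' = 1
        have : ∑ j, w' j = ∑ i, w' (e i) := by
          have := hsum (fun j => (w' j) • (1:ℝ) • (0:E))
          -- scalar version: redo directly
          rw [← Finset.sum_subset (Finset.subset_univ (Finset.univ.image e))
            (fun j _ hj => by simp only [hw']; exact dif_neg (hnotin j hj))]
          rw [Finset.sum_image (fun a _ b _ h => e.injective h)]
        rw [this]
        simp only [hw'e]
        exact hwsum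
      · intro j _
        simp only [hz']
        split
        · exact hzs ⟨_, rfl⟩
        · exact hzs ⟨_, rfl⟩
      · -- combination equals x
        rw [hf]
        dsimp only
        have : ∑ j, w' j • z' j = ∑ i, w' (e i) • z' (e i) := by
          apply hsum
          intro j hj
          simp only [hw']
          rw [dif_neg (hnotin j hj), zero_smul]
        rw [this]
        simp only [hw'e, hz'e]
        exact hcomb
    · rintro x ⟨⟨w, z⟩, ⟨hw, hz⟩, rfl⟩
      exact (convex_convexHull ℝ s).sum_mem (fun i _ => hw.1 i) hw.2
        (fun i _ => subset_convexHull ℝ s (hz i (Set.mem_univ i)))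
  rw [himg]
  exact hAc.image hfc

end Cara
section Cone
variable {n : ℕ}

/-- The cone over `D`. -/
def coneOver {n : ℕ} (D : Set (Esp n)) : Set (Esp n) :=
  {z | ∃ l : ℝ, 0 ≤ l ∧ ∃ y ∈ D, z = l • y}

lemma coneOver_convex {D : Set (Esp n)} (hD : Convex ℝ D) (hne : D.Nonempty) :
    Convex ℝ (coneOver D) := by
  obtain ⟨y₀, hy₀⟩ := hne
  rintro z1 ⟨l1, hl1, y1, hy1, rfl⟩ z2 ⟨l2, hl2, y2, hy2, rfl⟩ a b ha hb hab
  rcases eq_or_lt_of_le (by positivity : (0:ℝ) ≤ a * l1 + b * l2) with h0 | h0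
  · -- both coefficients zero
    have h1 : a * l1 = 0 ∧ b * l2 = 0 := by
      constructor <;> nlinarith [mul_nonneg ha hl1, mul_nonneg hb hl2]
    refine ⟨0, le_refl 0, y₀, hy₀, ?_⟩
    rw [zero_smul, smul_smul, smul_smul, h1.1, h1.2, zero_smul, zero_smul, add_zero]
  · set l := a * l1 + b * l2 with hl
    refine ⟨l, le_of_lt h0, l⁻¹ • (a • l1 • y1 + b • l2 • y2), ?_, ?_⟩
    · have hmem : (a * l1 / l) • y1 + (b * l2 / l) • y2 ∈ D := by
        apply hD hy1 hy2 (by positivity) (by positivity)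
        field_simp
        exact hl.symm
      have : l⁻¹ • (a • l1 • y1 + b • l2 • y2)
          = (a * l1 / l) • y1 + (b * l2 / l) • y2 := by
        rw [smul_add, smul_smul, smul_smul, smul_smul, smul_smul]
        rw [div_eq_inv_mul, div_eq_inv_mul]
        ring_nf
      rw [this]
      exact hmem
    · rw [smul_inv_smul₀ (ne_of_gt h0)]

lemma coneOver_isClosed {u : Esp n} {D : Set (Esp n)} (hD : IsCompact D) {c : ℝ} (hc : 0 < c)
    (hDc : ∀ y ∈ D, c ≤ ⟪u, y⟫) : IsClosed (coneOver D) := by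
  rcases D.eq_empty_or_nonempty with rfl | hne
  · have : coneOver (∅ : Set (Esp n)) = ∅ := by
      ext z; simp [coneOver]
    rw [this]; exact isClosed_empty
  apply IsSeqClosed.isClosed
  intro zs z hz hlim
  choose l hl y hy hzs using hz
  have htend : Filter.Tendsto (fun k => ⟪u, zs k⟫) Filter.atTop (nhds ⟪u, z⟫) :=
    Filter.Tendsto.inner tendsto_const_nhds hlim
  obtain ⟨M, hM⟩ := htend.bddAbove_range
  have hlbound : ∀ k, l k ≤ M / c := by
    intro k
    have h1 : c * l k ≤ ⟪u, zs k⟫ := by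
      rw [hzs k, real_inner_smul_right]
      have := hDc (y k) (hy k)
      nlinarith [hl k]
    have h2 : ⟪u, zs k⟫ ≤ M := hM ⟨k, rfl⟩
    rw [le_div_iff₀ hc]
    nlinarith
  obtain ⟨yl, hylD, φ, hφ, hyconv⟩ := hD.tendsto_subseq hy
  obtain ⟨ll, hll, ψ, hψ, hlconv⟩ := (isCompact_Icc (a := (0:ℝ)) (b := M / c)).tendsto_subseq
    (x := fun k => l (φ k)) (fun k => ⟨hl _, hlbound _⟩)
  have h1 : Filter.Tendsto (fun k => zs (φ (ψ k))) Filter.atTop (nhds z) :=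
    hlim.comp ((hφ.comp hψ).tendsto_atTop)
  have h2 : Filter.Tendsto (fun k => zs (φ (ψ k))) Filter.atTop (nhds (ll • yl)) := by
    have : (fun k => zs (φ (ψ k))) = fun k => (l (φ (ψ k))) • (y (φ (ψ k))) := by
      funext k; exact hzs _
    rw [this]
    exact Filter.Tendsto.smul hlconv (hyconv.comp hψ.tendsto_atTop)
  exact ⟨ll, hll.1, yl, hylD, tendsto_nhds_unique h1 h2⟩

end Cone
section Geom
variable {n : ℕ}

lemma inner_continuous (u : Esp n) : Continuous (fun y : Esp n => ⟪u, y⟫) :=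
  Continuous.inner continuous_const continuous_id

/-- Geometric core: a unit vector on the nonnegative side of every strictly
separating hyperplane of `S` lies in the spherical hull of `S`. -/
lemma geom_lemma {u : Esp n} (hu : ‖u‖ = 1) {S : Set (Esp n)} (hSne : S.Nonempty)
    (hScpt : IsCompact S) (hS : S ⊆ openHemi u) {x : Esp n} (hx : ‖x‖ = 1)
    (hxw : ∀ w : Esp n, ‖w‖ = 1 → (∀ y ∈ S, 0 < ⟪w, y⟫) → 0 ≤ ⟪w, x⟫) :
    x ∈ sphHull S := by
  classical
  set D := convexHull ℝ S with hD
  have hDcpt : IsCompact D := isCompact_convexHull_fd hScpt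
  have hDconv : Convex ℝ D := convex_convexHull ℝ S
  obtain ⟨y₀, hy₀S⟩ := hSne
  have hy₀D : y₀ ∈ D := subset_convexHull ℝ S hy₀S
  -- lower bound for ⟪u,·⟫ on D
  obtain ⟨ym, hymS, hymmin⟩ := hScpt.exists_isMinOn ⟨y₀, hy₀S⟩ (inner_continuous u).continuousOn
  set c := ⟪u, ym⟫ with hc
  have hcpos : 0 < c := (hS hymS).2
  have hDc : ∀ y ∈ D, c ≤ ⟪u, y⟫ := by
    have : D ⊆ {y | c ≤ ⟪u, y⟫} := by
      rw [hD]
      apply convexHull_min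
      · intro y hy
        exact hymmin hy
      · exact convex_halfSpace_ge
          ⟨fun a b => inner_add_right u a b, fun r a => real_inner_smul_right u a r⟩ c
    exact fun y hy => this hy
  -- x lies in the cone over D
  have hxT : x ∈ coneOver D := by
    by_contra hxT
    obtain ⟨f, r, hfT, hrx⟩ := geometric_hahn_banach_closed_point
      (coneOver_convex hDconv ⟨y₀, hy₀D⟩) (coneOver_isClosed hDcpt hcpos hDc) hxT
    have h0T : (0 : Esp n) ∈ coneOver D := ⟨0, le_refl 0, y₀, hy₀D, (zero_smul ℝ y₀).symm⟩
    have hr0 : 0 < r := by have := hfT 0 h0T; simpa using this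
    have hfD : ∀ y ∈ coneOver D, f y ≤ 0 := by
      intro y hy
      by_contra hfy
      push_neg at hfy
      obtain ⟨l, hl, y', hy', rfl⟩ := hy
      have hmem : ((r + 1) / f (l • y')) • (l • y') ∈ coneOver D := by
        refine ⟨((r + 1) / f (l • y')) * l, ?_, y', hy', by rw [smul_smul]⟩
        positivity
      have := hfT _ hmem
      rw [map_smul, smul_eq_mul, div_mul_cancel₀ _ (ne_of_gt hfy)] at this
      linarith
    set w₀ : Esp n := -((InnerProductSpace.toDual ℝ (Esp n)).symm f) with hw₀
    have hw₀app : ∀ a : Esp n, ⟪w₀, a⟫ = -(f a) := by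
      intro a
      rw [hw₀, inner_neg_left, InnerProductSpace.toDual_symm_apply]
    have hw₀S : ∀ y ∈ S, 0 ≤ ⟪w₀, y⟫ := by
      intro y hy
      rw [hw₀app]
      have : f y ≤ 0 := hfD y ⟨1, zero_le_one, y, subset_convexHull ℝ S hy, (one_smul ℝ y).symm⟩
      linarith
    have hw₀x : ⟪w₀, x⟫ < 0 := by
      rw [hw₀app]
      linarith [hrx, hr0]
    set δ : ℝ := -⟪w₀, x⟫ / 2 with hδ
    have hδpos : 0 < δ := by rw [hδ]; linarith
    set w' : Esp n := w₀ + δ • u with hw'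
    have hw'S : ∀ y ∈ S, 0 < ⟪w', y⟫ := by
      intro y hy
      rw [hw', inner_add_left, real_inner_smul_left]
      have h1 := hw₀S y hy
      have h2 : 0 < ⟪u, y⟫ := (hS hy).2
      nlinarith
    have hw'x : ⟪w', x⟫ < 0 := by
      rw [hw', inner_add_left, real_inner_smul_left]
      have h1 : ⟪u, x⟫ ≤ 1 := by
        have := real_inner_le_norm u x
        rwa [hu, hx, one_mul] at this
      nlinarith
    have hw'0 : w' ≠ 0 := by
      intro h
      rw [h, inner_zero_left] at hw'x
      exact lt_irrefl 0 hw'x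
    have := hxw (‖w'‖⁻¹ • w') (normalize_unit hw'0)
      (fun y hy => inner_normalize_pos hw'0 (hw'S y hy))
    rw [real_inner_smul_left] at this
    nlinarith [inv_pos.2 (norm_pos_iff.2 hw'0), this]
  -- conclude: x lies in every spherically convex superset of S inside the sphere
  intro B hB
  obtain ⟨hSB, hBsph, hBconv⟩ := hB
  have hDrad : D ⊆ radSet B := by
    rw [hD]
    apply convexHull_min
    · exact fun y hy => mem_radSet_self (hSB hy)
    · exact hBconv
  obtain ⟨l, hl, y, hyD, hxy⟩ := hxT
  obtain ⟨l', hl', b, hb, hyb⟩ := hDrad hyD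
  have hxlb : x = (l * l') • b := by rw [hxy, hyb, smul_smul]
  have hbnorm : ‖b‖ = 1 := hBsph hb
  have : ‖x‖ = l * l' := by
    rw [hxlb, norm_smul, hbnorm, mul_one, Real.norm_eq_abs, abs_of_nonneg (by positivity)]
  rw [hx] at this
  rw [hxlb, ← this, one_smul]
  exact hb

end Geom
section Main
variable {n : ℕ}

lemma neg_unit_ne {u : Esp n} (hu : ‖u‖ = 1) : -u ≠ u := by
  intro h
  have hz : u = 0 := by
    have h2 : u + u = 0 := by nth_rewrite 1 [← h]; exact neg_add_cancel u
    have h3 : (2:ℝ) • u = 0 := by rw [two_smul]; exact h2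
    simpa using smul_eq_zero.mp h3
  exact unit_ne_zero hu hz

theorem stmt14' {n : ℕ} (hn : 2 ≤ n) (op : Set (Esp n) → Set (Esp n) → Set (Esp n))
    (hmap : ∀ p ∈ pairsC n, op p.1 p.2 ∈ allProperBodies n)
    (hcov : projCovariantC op) :
    (∀ p ∈ pairsC n, op p.1 p.2 ⊆ sphHull (p.1 ∪ p.2)) ∨
    (∀ p ∈ pairsC n, op p.1 p.2 ⊆ -sphHull (p.1 ∪ p.2)) := by
  classical
  set e₀ : Esp n := EuclideanSpace.single (0 : Fin (n+1)) (1:ℝ) with he₀def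
  have he₀ : ‖e₀‖ = 1 := by rw [he₀def, EuclideanSpace.norm_single]; norm_num
  -- common setup for a pair
  have setup : ∀ p ∈ pairsC n, ∃ u : Esp n, ‖u‖ = 1 ∧
      (p.1 ∪ p.2).Nonempty ∧ IsCompact (p.1 ∪ p.2) ∧ (p.1 ∪ p.2) ⊆ openHemi u ∧
      (∀ w : Esp n, ‖w‖ = 1 → (∀ y ∈ p.1 ∪ p.2, 0 < ⟪w, y⟫) →
        sphProj (ℝ ∙ w) (op p.1 p.2) = op {w} {w}) := by
    rintro p ⟨u, hu, hK, hL⟩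
    have hSsub : (p.1 ∪ p.2) ⊆ openHemi u := Set.union_subset hK.2.2.1 hL.2.2.1
    refine ⟨u, hu, ?_, ?_, hSsub, ?_⟩
    · exact Set.Nonempty.inl hK.1
    · apply Metric.isCompact_of_isClosed_isBounded (hK.2.1.union hL.2.1)
      apply Bornology.IsBounded.subset (Metric.isBounded_closedBall (x := (0 : Esp n)) (r := 1))
      intro y hy
      rw [Metric.mem_closedBall, dist_zero_right, (hSsub hy).1]
    · intro w hw hwS
      have hKw : p.1 ∈ properBodies w :=
        ⟨hK.1, hK.2.1, fun y hy => ⟨(hK.2.2.1 hy).1, hwS y (Or.inl hy)⟩, hK.2.2.2⟩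
      have hLw : p.2 ∈ properBodies w :=
        ⟨hL.1, hL.2.1, fun y hy => ⟨(hL.2.2.1 hy).1, hwS y (Or.inr hy)⟩, hL.2.2.2⟩
      exact key0 op hn hcov hw hKw hLw
  rcases key1 op hn hmap hcov he₀ with hpos | hneg
  · left
    have hall : ∀ w : Esp n, ‖w‖ = 1 → op {w} {w} = {w} :=
      fun w hw => (key3 op hn hmap hcov hw he₀).2 hpos
    intro p hp x hx
    obtain ⟨u, hu, hSne, hScpt, hSsub, hproj⟩ := setup p hp
    obtain ⟨w₀, hw₀, hMne, hMcl, hMsub, hMcv⟩ := hmap p hp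
    have hx1 : ‖x‖ = 1 := (hMsub hx).1
    apply geom_lemma hu hSne hScpt hSsub hx1
    intro w hw hwS
    by_contra hcon
    push_neg at hcon
    have hproj' := hproj w hw hwS
    rw [hall w hw] at hproj'
    have hmem : -w ∈ sphProj (ℝ ∙ w) (op p.1 p.2) := by
      refine ⟨⟨(-⟪w, x⟫)⁻¹ • x, ⟨(-⟪w, x⟫)⁻¹,
        le_of_lt (inv_pos.2 (neg_pos.2 hcon)), x, hx, rfl⟩, ?_⟩,
        by show ‖-w‖ = 1; rw [norm_neg]; exact hw⟩
      dsimp only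
      rw [proj_span_apply hw, real_inner_smul_right]
      have : (-⟪w, x⟫)⁻¹ * ⟪w, x⟫ = -1 := by
        have hne : ⟪w, x⟫ ≠ 0 := ne_of_lt hcon
        rw [← neg_inv, neg_mul, inv_mul_cancel₀ hne]
      rw [this, neg_one_smul]
    rw [hproj'] at hmem
    exact neg_unit_ne hw hmem
  · right
    have hall : ∀ w : Esp n, ‖w‖ = 1 → op {w} {w} = {-w} := by
      intro w hw
      rcases key1 op hn hmap hcov hw with h | h
      · exfalso
        have := (key3 op hn hmap hcov hw he₀).1 h
        rw [hneg] at this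
        exact neg_singleton_ne he₀ this
      · exact h
    intro p hp x hx
    obtain ⟨u, hu, hSne, hScpt, hSsub, hproj⟩ := setup p hp
    obtain ⟨w₀, hw₀, hMne, hMcl, hMsub, hMcv⟩ := hmap p hp
    have hx1 : ‖(-x)‖ = 1 := by rw [norm_neg]; exact (hMsub hx).1
    rw [Set.mem_neg]
    apply geom_lemma hu hSne hScpt hSsub hx1
    intro w hw hwS
    rw [inner_neg_right]
    by_contra hcon
    push_neg at hcon
    have hxpos : 0 < ⟪w, x⟫ := by linarith
    have hproj' := hproj w hw hwS
    rw [hall w hw] at hproj'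
    have hmem : w ∈ sphProj (ℝ ∙ w) (op p.1 p.2) := by
      refine ⟨⟨(⟪w, x⟫)⁻¹ • x, ⟨(⟪w, x⟫)⁻¹,
        le_of_lt (inv_pos.2 hxpos), x, hx, rfl⟩, ?_⟩, hw⟩
      dsimp only
      rw [proj_span_apply hw, real_inner_smul_right, inv_mul_cancel₀ (ne_of_gt hxpos), one_smul]
    rw [hproj'] at hmem
    exact neg_unit_ne hw (hmem : w = -w).symm

end Main

/-- If `* : C → K^p(S^n)` is projection covariant, then either
`K*L ⊆ conv(K ∪ L)` for all `(K,L) ∈ C`, or `K*L ⊆ −conv(K ∪ L)` for all `(K,L) ∈ C`. -/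
theorem stmt14 {n : ℕ} (hn : 2 ≤ n) (op : Set (Esp n) → Set (Esp n) → Set (Esp n))
    (hmap : ∀ p ∈ pairsC n, op p.1 p.2 ∈ allProperBodies n)
    (hcov : projCovariantC op) :
    (∀ p ∈ pairsC n, op p.1 p.2 ⊆ sphHull (p.1 ∪ p.2)) ∨
    (∀ p ∈ pairsC n, op p.1 p.2 ⊆ -sphHull (p.1 ∪ p.2)) := by
  exact stmt14' hn op hmap hcov
end
end
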